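/- arXiv:1205.4753 — 4 statements merged into one kernel-verified Lean document; each statement's English description precedes it below -/
import Mathlib

section
/- There exists a universal constant C > 0 such that for all integers 1 ≤ k < n and all x ∈ [0,1] the following holds. Set y_{n,k} = (n−k)/(n−1), ε = (x − y_{n,k})/y_{n,k}, and q = n^{3/2} k^{-3/2} (n−k)^{-1/2}. Then (1/k)·C(n,k)·x^{n-k}(1-x)^{k-1} ≤ (C·q/k)·exp( − min{|ε|, 1/4}² · (n−k) / 4 ), where C(n,k) is the binomial coefficient n choose k. -/
open scoped BigOperators
open Real Filter Nat Topology


/-- `log(1+u) ≤ u - u²/2` for `-1 < u ≤ 0`. -/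
lemma log_quad_neg {u : ℝ} (h1 : -1 < u) (h2 : u ≤ 0) :
    Real.log (1 + u) ≤ u - u ^ 2 / 2 := by
  set f : ℝ → ℝ := fun t => t - t ^ 2 / 2 - Real.log (1 + t) with hf
  have hderiv : ∀ t ∈ Set.Ioo u (0:ℝ), HasDerivAt f (-(t ^ 2) / (1 + t)) t := by
    intro t ht
    have h1t : (0:ℝ) < 1 + t := by linarith [ht.1]
    have hlog : HasDerivAt (fun t : ℝ => Real.log (1 + t)) (1 / (1 + t)) t := by
      have := ((hasDerivAt_id t).const_add 1).log (ne_of_gt h1t)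
      simpa using this
    have hpoly : HasDerivAt (fun t : ℝ => t - t ^ 2 / 2) (1 - t) t := by
      have := ((hasDerivAt_pow 2 t).div_const 2)
      have := (hasDerivAt_id' t).fun_sub this
      exact this.congr_deriv (by norm_num)
    have := hpoly.fun_sub hlog
    refine this.congr_deriv ?_
    field_simp
    ring
  have hcont : ContinuousOn f (Set.Icc u 0) := by
    apply ContinuousOn.sub
    · fun_prop
    · apply ContinuousOn.log
      · fun_prop
      · intro t ht
        intro hc; linarith [ht.1]
  have hanti : AntitoneOn f (Set.Icc u 0) := by
    apply antitoneOn_of_deriv_nonpos (convex_Icc u 0) hcont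
    · intro t ht
      rw [interior_Icc] at ht
      exact (hderiv t ht).differentiableAt.differentiableWithinAt
    · intro t ht
      rw [interior_Icc] at ht
      rw [(hderiv t ht).deriv]
      have h1t : (0:ℝ) < 1 + t := by linarith [ht.1]
      have h2t : (0:ℝ) ≤ t^2 := sq_nonneg t
      have : (0:ℝ) ≤ t^2 / (1+t) := by positivity
      rw [neg_div]; linarith
  have hle := hanti (Set.left_mem_Icc.2 h2) (Set.right_mem_Icc.2 h2) h2
  have hf0 : f 0 = 0 := by simp [hf]
  have hfu : f u = u - u ^ 2 / 2 - Real.log (1 + u) := rfl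
  rw [hf0, hfu] at hle
  linarith


/-- `log(1+u) ≤ u - u²/(2(1+u)²)` for `0 ≤ u`. -/
lemma log_quad_pos {u : ℝ} (h0 : 0 ≤ u) :
    Real.log (1 + u) ≤ u - u ^ 2 / (2 * (1 + u) ^ 2) := by
  set f : ℝ → ℝ := fun t => t - t ^ 2 / (2 * (1 + t) ^ 2) - Real.log (1 + t) with hf
  have hderiv : ∀ t : ℝ, 0 < t → HasDerivAt f (t ^ 2 * (t + 2) / (1 + t) ^ 3) t := by
    intro t ht
    have h1t : (0:ℝ) < 1 + t := by linarith
    have hlog : HasDerivAt (fun t : ℝ => Real.log (1 + t)) (1 / (1 + t)) t := by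
      have := ((hasDerivAt_id t).const_add 1).log (ne_of_gt h1t)
      simpa using this
    have hnum : HasDerivAt (fun t : ℝ => t ^ 2) (2 * t) t := by
      simpa using hasDerivAt_pow 2 t
    have hden : HasDerivAt (fun t : ℝ => 2 * (1 + t) ^ 2) (2 * (2 * (1 + t))) t := by
      have h := ((hasDerivAt_id t).const_add 1).pow 2
      have := h.const_mul 2
      refine this.congr_deriv ?_
      simp
    have hq : HasDerivAt (fun t : ℝ => t ^ 2 / (2 * (1 + t) ^ 2))
        ((2 * t * (2 * (1 + t) ^ 2) - t ^ 2 * (2 * (2 * (1 + t)))) / (2 * (1 + t) ^ 2) ^ 2) t :=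
      hnum.div hden (by positivity)
    have := ((hasDerivAt_id' t).fun_sub hq).fun_sub hlog
    refine this.congr_deriv ?_
    field_simp
    ring
  have hcont : ContinuousOn f (Set.Icc 0 u) := by
    apply ContinuousOn.sub
    · apply ContinuousOn.sub
      · fun_prop
      · apply ContinuousOn.div
        · fun_prop
        · fun_prop
        · intro t ht
          have := ht.1
          positivity
    · apply ContinuousOn.log
      · fun_prop
      · intro t ht
        have := ht.1
        intro hc; linarith
  have hmono : MonotoneOn f (Set.Icc 0 u) := by
    apply monotoneOn_of_deriv_nonneg (convex_Icc 0 u) hcont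
    · intro t ht
      rw [interior_Icc] at ht
      exact (hderiv t ht.1).differentiableAt.differentiableWithinAt
    · intro t ht
      rw [interior_Icc] at ht
      rw [(hderiv t ht.1).deriv]
      have := ht.1
      positivity
  have hle := hmono (Set.left_mem_Icc.2 h0) (Set.right_mem_Icc.2 h0) h0
  have hf0 : f 0 = 0 := by simp [hf]
  have hfu : f u = u - u ^ 2 / (2 * (1 + u) ^ 2) - Real.log (1 + u) := rfl
  rw [hf0, hfu] at hle
  linarith


section key
variable {a b : ℕ}

/-- `x ≤ y` case. -/
lemma key_le (ha : 1 ≤ a) {x : ℝ} (hx0 : 0 ≤ x)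
    (hxy : x ≤ (a : ℝ) / ((a : ℝ) + b)) :
    x ^ a * (1 - x) ^ b ≤
      ((a : ℝ) / ((a : ℝ) + b)) ^ a * (1 - (a : ℝ) / ((a : ℝ) + b)) ^ b *
        Real.exp (-((a : ℝ) * (x - (a : ℝ) / ((a : ℝ) + b)) ^ 2 /
          (2 * ((a : ℝ) / ((a : ℝ) + b)) ^ 2))) := by
  have hapos : (0:ℝ) < a := by exact_mod_cast ha
  have habpos : (0:ℝ) < (a:ℝ) + b := by positivity
  obtain ⟨y, hy⟩ : ∃ y : ℝ, y = (a : ℝ) / ((a : ℝ) + b) := ⟨_, rfl⟩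
  rw [← hy] at hxy ⊢
  have hy0 : 0 < y := by rw [hy]; positivity
  have hy1 : y ≤ 1 := by rw [hy, div_le_one habpos]; simp
  have hab : (a:ℝ) * (1 - y) = (b:ℝ) * y := by rw [hy]; field_simp; ring
  have h1ynn : 0 ≤ 1 - y := by linarith
  rcases eq_or_lt_of_le hx0 with hx0' | hx0'
  · rw [← hx0', zero_pow (by omega : a ≠ 0), zero_mul]
    positivity
  obtain ⟨u, hu⟩ : ∃ u : ℝ, u = (x - y) / y := ⟨_, rfl⟩
  have hu1 : -1 < u := by rw [hu, lt_div_iff₀ hy0]; linarith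
  have hu2 : u ≤ 0 := by
    rw [hu]
    apply div_nonpos_of_nonpos_of_nonneg <;> linarith
  have huxy : x = y * (1 + u) := by rw [hu]; field_simp; ring
  have hL1 := log_quad_neg hu1 hu2
  have hEeq : -((a : ℝ) * (x - y) ^ 2 / (2 * y ^ 2)) = (a:ℝ) * (-(u^2)/2) := by
    rw [hu, div_pow]
    ring
  have hanu : (a:ℝ) * (-u) = (a:ℝ) * (y - x) / y := by
    rw [hu]
    ring
  have hbterm : (b:ℝ) * (Real.log (1-x) - Real.log (1-y)) ≤ (a:ℝ) * (-u) := by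
    rcases Nat.eq_zero_or_pos b with hb | hb
    · subst hb
      simp only [Nat.cast_zero, zero_mul]
      rw [hanu]
      apply div_nonneg _ hy0.le
      nlinarith
    · have hbpos : (0:ℝ) < b := by exact_mod_cast hb
      have h1y' : 0 < 1 - y := by
        have h2 : 0 < (a:ℝ) * (1 - y) := hab ▸ mul_pos hbpos hy0
        rcases mul_pos_iff.mp h2 with ⟨_, h⟩ | ⟨h, _⟩
        · exact h
        · linarith
      have hy1' : y < 1 := by linarith
      have h1x : 0 < 1 - x := by linarith
      have hlog := Real.log_le_sub_one_of_pos (show (0:ℝ) < (1-x)/(1-y) by positivity)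
      rw [Real.log_div (by linarith) (by linarith)] at hlog
      have step : (b:ℝ) * (Real.log (1-x) - Real.log (1-y)) ≤ (b:ℝ) * ((1-x)/(1-y) - 1) :=
        mul_le_mul_of_nonneg_left hlog (by positivity)
      have ident : (b:ℝ) * ((1-x)/(1-y) - 1) = (b:ℝ)/(1-y) * (y - x) := by
        rw [div_sub_one h1y'.ne']
        ring
      have key2 : (b:ℝ)/(1-y) = (a:ℝ)/y := by
        rw [div_eq_div_iff h1y'.ne' hy0.ne']; linarith
      rw [hanu]
      rw [ident, key2] at step
      calc (b:ℝ) * (Real.log (1-x) - Real.log (1-y)) ≤ (a:ℝ)/y * (y-x) := step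
        _ = (a:ℝ) * (y - x) / y := by ring
  have haterm : (a:ℝ) * (Real.log x - Real.log y) ≤ (a:ℝ) * (u - u^2/2) := by
    have hlx : Real.log x - Real.log y = Real.log (1 + u) := by
      rw [huxy, Real.log_mul hy0.ne' (by nlinarith)]
      simp
    rw [hlx]
    exact mul_le_mul_of_nonneg_left hL1 hapos.le
  have h1x0 : 0 ≤ 1 - x := by
    have : x ≤ 1 := le_trans hxy hy1
    linarith
  rcases eq_or_lt_of_le h1x0 with h1x' | h1x'
  · -- x = 1, hence y = 1
    have hx1 : x = 1 := by linarith
    have hyx : y = 1 := le_antisymm hy1 (by rw [← hx1]; exact hxy)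
    subst hx1
    rw [hyx]
    norm_num
  · have hLeq : x ^ a * (1 - x) ^ b = Real.exp ((a:ℝ) * Real.log x + (b:ℝ) * Real.log (1-x)) := by
      rw [Real.exp_add, ← Real.log_pow, ← Real.log_pow, Real.exp_log (pow_pos hx0' a),
        Real.exp_log (pow_pos h1x' b)]
    rcases Nat.eq_zero_or_pos b with hb | hb
    · subst hb
      have hyx : y = 1 := by
        rw [hy, Nat.cast_zero, add_zero]
        exact div_self hapos.ne'
      subst hyx
      simp only [pow_zero, mul_one, Nat.cast_zero, zero_mul, add_zero, one_pow, one_mul] at hLeq ⊢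
      rw [hLeq]
      apply Real.exp_le_exp.2
      have hux : u = x - 1 := by rw [hu]; ring
      rw [Real.log_one, hux] at haterm
      nlinarith [haterm, mul_nonneg hapos.le (show (0:ℝ) ≤ 1 - x by linarith),
        mul_nonneg hapos.le (sq_nonneg (x-1))]
    · have hbpos : (0:ℝ) < b := by exact_mod_cast hb
      have h1y' : 0 < 1 - y := by
        have h2 : 0 < (a:ℝ) * (1 - y) := hab ▸ mul_pos hbpos hy0
        rcases mul_pos_iff.mp h2 with ⟨_, h⟩ | ⟨h, _⟩
        · exact h
        · linarith
      have hy1' : y < 1 := by linarith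
      have hReq : y ^ a * (1 - y) ^ b
          = Real.exp ((a:ℝ) * Real.log y + (b:ℝ) * Real.log (1-y)) := by
        rw [Real.exp_add, ← Real.log_pow, ← Real.log_pow, Real.exp_log (pow_pos hy0 a),
          Real.exp_log (pow_pos h1y' b)]
      rw [hLeq, hReq, ← Real.exp_add, hEeq]
      apply Real.exp_le_exp.2
      linarith [haterm, hbterm]
end key


section key
variable {a b : ℕ}

/-- `y ≤ x` case. -/
lemma key_ge (ha : 1 ≤ a) {x : ℝ} (hyx : (a : ℝ) / ((a : ℝ) + b) ≤ x) (hx1 : x ≤ 1) :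
    x ^ a * (1 - x) ^ b ≤
      ((a : ℝ) / ((a : ℝ) + b)) ^ a * (1 - (a : ℝ) / ((a : ℝ) + b)) ^ b *
        Real.exp (-((a : ℝ) * (x - (a : ℝ) / ((a : ℝ) + b)) ^ 2 / (2 * x ^ 2))) := by
  have hapos : (0:ℝ) < a := by exact_mod_cast ha
  have habpos : (0:ℝ) < (a:ℝ) + b := by positivity
  obtain ⟨y, hy⟩ : ∃ y : ℝ, y = (a : ℝ) / ((a : ℝ) + b) := ⟨_, rfl⟩
  rw [← hy] at hyx ⊢
  have hy0 : 0 < y := by rw [hy]; positivity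
  have hy1 : y ≤ 1 := by rw [hy, div_le_one habpos]; simp
  have hab : (a:ℝ) * (1 - y) = (b:ℝ) * y := by rw [hy]; field_simp; ring
  have hx0' : 0 < x := lt_of_lt_of_le hy0 hyx
  rcases Nat.eq_zero_or_pos b with hb | hb
  · -- b = 0, y = 1, so x = 1
    subst hb
    have hyx1 : y = 1 := by
      rw [hy, Nat.cast_zero, add_zero]
      exact div_self hapos.ne'
    have hx1' : x = 1 := le_antisymm hx1 (by rw [← hyx1]; exact hyx)
    subst hx1'
    rw [hyx1]
    norm_num
  have hbpos : (0:ℝ) < b := by exact_mod_cast hb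
  have h1y' : 0 < 1 - y := by
    have h2 : 0 < (a:ℝ) * (1 - y) := hab ▸ mul_pos hbpos hy0
    rcases mul_pos_iff.mp h2 with ⟨_, h⟩ | ⟨h, _⟩
    · exact h
    · linarith
  rcases eq_or_lt_of_le hx1 with hx1' | hx1'
  · -- x = 1 : LHS = 0
    subst hx1'
    rw [sub_self, zero_pow (by omega : b ≠ 0), mul_zero]
    positivity
  have h1x : 0 < 1 - x := by linarith
  obtain ⟨u, hu⟩ : ∃ u : ℝ, u = (x - y) / y := ⟨_, rfl⟩
  have hu0 : 0 ≤ u := by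
    rw [hu]
    apply div_nonneg _ hy0.le
    linarith
  have h1u : 1 + u = x / y := by rw [hu]; field_simp; ring
  have h1upos : 0 < 1 + u := by linarith
  have hL2 := log_quad_pos hu0
  have hid : u ^ 2 / (1 + u) ^ 2 = (x - y) ^ 2 / x ^ 2 := by
    rw [h1u, hu, div_pow, div_pow]
    rw [div_div_div_cancel_right₀]
    positivity
  have haterm : (a:ℝ) * (Real.log x - Real.log y) ≤
      (a:ℝ) * (u - u ^ 2 / (2 * (1 + u) ^ 2)) := by
    have hlx : Real.log x - Real.log y = Real.log (1 + u) := by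
      rw [h1u, Real.log_div hx0'.ne' hy0.ne']
    rw [hlx]
    exact mul_le_mul_of_nonneg_left hL2 hapos.le
  have hanu : (a:ℝ) * (-u) = (a:ℝ) * (y - x) / y := by rw [hu]; ring
  have hbterm : (b:ℝ) * (Real.log (1-x) - Real.log (1-y)) ≤ (a:ℝ) * (-u) := by
    have hlog := Real.log_le_sub_one_of_pos (show (0:ℝ) < (1-x)/(1-y) by positivity)
    rw [Real.log_div (by linarith) (by linarith)] at hlog
    have step : (b:ℝ) * (Real.log (1-x) - Real.log (1-y)) ≤ (b:ℝ) * ((1-x)/(1-y) - 1) :=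
      mul_le_mul_of_nonneg_left hlog (by positivity)
    have ident : (b:ℝ) * ((1-x)/(1-y) - 1) = (b:ℝ)/(1-y) * (y - x) := by
      rw [div_sub_one h1y'.ne']
      ring
    have key2 : (b:ℝ)/(1-y) = (a:ℝ)/y := by
      rw [div_eq_div_iff h1y'.ne' hy0.ne']; linarith
    rw [hanu]
    rw [ident, key2] at step
    calc (b:ℝ) * (Real.log (1-x) - Real.log (1-y)) ≤ (a:ℝ)/y * (y-x) := step
      _ = (a:ℝ) * (y - x) / y := by ring
  have hEeq : -((a : ℝ) * (x - y) ^ 2 / (2 * x ^ 2)) = (a:ℝ) * (-(u^2/(2*(1+u)^2))) := by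
    have := hid
    field_simp at this ⊢
    nlinarith [this]
  have hLeq : x ^ a * (1 - x) ^ b = Real.exp ((a:ℝ) * Real.log x + (b:ℝ) * Real.log (1-x)) := by
    rw [Real.exp_add, ← Real.log_pow, ← Real.log_pow, Real.exp_log (pow_pos hx0' a),
      Real.exp_log (pow_pos h1x b)]
  have hReq : y ^ a * (1 - y) ^ b = Real.exp ((a:ℝ) * Real.log y + (b:ℝ) * Real.log (1-y)) := by
    rw [Real.exp_add, ← Real.log_pow, ← Real.log_pow, Real.exp_log (pow_pos hy0 a),
      Real.exp_log (pow_pos h1y' b)]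
  rw [hLeq, hReq, ← Real.exp_add, hEeq]
  apply Real.exp_le_exp.2
  linarith [haterm, hbterm]

/-- monotonicity to the right of the mode. -/
lemma mono_right (ha : 1 ≤ a) {s x : ℝ} (hys : (a : ℝ) / ((a : ℝ) + b) ≤ s)
    (hsx : s ≤ x) (hx1 : x ≤ 1) :
    x ^ a * (1 - x) ^ b ≤ s ^ a * (1 - s) ^ b := by
  have hapos : (0:ℝ) < a := by exact_mod_cast ha
  have habpos : (0:ℝ) < (a:ℝ) + b := by positivity
  obtain ⟨y, hy⟩ : ∃ y : ℝ, y = (a : ℝ) / ((a : ℝ) + b) := ⟨_, rfl⟩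
  rw [← hy] at hys
  have hy0 : 0 < y := by rw [hy]; positivity
  have hab : (a:ℝ) * (1 - y) = (b:ℝ) * y := by rw [hy]; field_simp; ring
  have hs0 : 0 < s := lt_of_lt_of_le hy0 hys
  have hs1 : s ≤ 1 := le_trans hsx hx1
  rcases Nat.eq_zero_or_pos b with hb | hb
  · subst hb
    have hyx1 : y = 1 := by
      rw [hy, Nat.cast_zero, add_zero]
      exact div_self hapos.ne'
    have hs1' : s = 1 := le_antisymm hs1 (by rw [← hyx1]; exact hys)
    have hx1' : x = 1 := le_antisymm hx1 (hs1' ▸ hsx)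
    subst hs1'; subst hx1'
    norm_num
  have hbpos : (0:ℝ) < b := by exact_mod_cast hb
  have h1y' : 0 < 1 - y := by
    have h2 : 0 < (a:ℝ) * (1 - y) := hab ▸ mul_pos hbpos hy0
    rcases mul_pos_iff.mp h2 with ⟨_, h⟩ | ⟨h, _⟩
    · exact h
    · linarith
  rcases eq_or_lt_of_le hx1 with hx1' | hx1'
  · subst hx1'
    rw [sub_self, zero_pow (by omega : b ≠ 0), mul_zero]
    have h1s : 0 ≤ 1 - s := by linarith
    positivity
  have h1x : 0 < 1 - x := by linarith
  have h1s : 0 < 1 - s := by linarith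
  have hx0' : 0 < x := lt_of_lt_of_le hs0 hsx
  -- log bounds
  have haterm : (a:ℝ) * (Real.log x - Real.log s) ≤ (a:ℝ)/s * (x - s) := by
    have hlog := Real.log_le_sub_one_of_pos (show (0:ℝ) < x/s by positivity)
    rw [Real.log_div hx0'.ne' hs0.ne'] at hlog
    have step := mul_le_mul_of_nonneg_left hlog hapos.le
    calc (a:ℝ) * (Real.log x - Real.log s) ≤ (a:ℝ) * (x/s - 1) := step
      _ = (a:ℝ)/s * (x - s) := by
          rw [div_sub_one hs0.ne']
          ring
  have hbterm : (b:ℝ) * (Real.log (1-x) - Real.log (1-s)) ≤ -((b:ℝ)/(1-s) * (x - s)) := by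
    have hlog := Real.log_le_sub_one_of_pos (show (0:ℝ) < (1-x)/(1-s) by positivity)
    rw [Real.log_div (by linarith) (by linarith)] at hlog
    have step := mul_le_mul_of_nonneg_left hlog hbpos.le
    calc (b:ℝ) * (Real.log (1-x) - Real.log (1-s)) ≤ (b:ℝ) * ((1-x)/(1-s) - 1) := step
      _ = -((b:ℝ)/(1-s) * (x - s)) := by
          rw [div_sub_one (by linarith : (1:ℝ) - s ≠ 0)]
          ring
  have hcomp : (a:ℝ)/s * (x - s) ≤ (b:ℝ)/(1-s) * (x - s) := by
    apply mul_le_mul_of_nonneg_right _ (by linarith : (0:ℝ) ≤ x - s)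
    rw [div_le_div_iff₀ hs0 h1s]
    have e1 : (a:ℝ) * (1 - s) ≤ (a:ℝ) * (1 - y) :=
      mul_le_mul_of_nonneg_left (by linarith) hapos.le
    have e2 : (b:ℝ) * y ≤ (b:ℝ) * s := mul_le_mul_of_nonneg_left hys hbpos.le
    linarith [hab]
  -- assemble
  have hLeq : x ^ a * (1 - x) ^ b = Real.exp ((a:ℝ) * Real.log x + (b:ℝ) * Real.log (1-x)) := by
    rw [Real.exp_add, ← Real.log_pow, ← Real.log_pow, Real.exp_log (pow_pos hx0' a),
      Real.exp_log (pow_pos h1x b)]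
  have hReq : s ^ a * (1 - s) ^ b = Real.exp ((a:ℝ) * Real.log s + (b:ℝ) * Real.log (1-s)) := by
    rw [Real.exp_add, ← Real.log_pow, ← Real.log_pow, Real.exp_log (pow_pos hs0 a),
      Real.exp_log (pow_pos h1s b)]
  rw [hLeq, hReq]
  apply Real.exp_le_exp.2
  linarith [haterm, hbterm, hcomp]
end key


section key2
variable {a b : ℕ}

set_option maxHeartbeats 1000000 in
lemma keyB (a b : ℕ) (ha : 1 ≤ a) {x : ℝ} (hx0 : 0 ≤ x) (hx1 : x ≤ 1) :
    x ^ a * (1 - x) ^ b ≤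
      ((a : ℝ) / ((a : ℝ) + b)) ^ a * (1 - (a : ℝ) / ((a : ℝ) + b)) ^ b *
        Real.exp (-((min |(x - (a : ℝ) / ((a : ℝ) + b)) / ((a : ℝ) / ((a : ℝ) + b))| (1/4)) ^ 2 *
          (a : ℝ) / 4)) := by
  have hapos : (0:ℝ) < a := by exact_mod_cast ha
  have habpos : (0:ℝ) < (a:ℝ) + b := by positivity
  obtain ⟨y, hy⟩ : ∃ y : ℝ, y = (a : ℝ) / ((a : ℝ) + b) := ⟨_, rfl⟩
  rw [← hy]
  have hy0 : 0 < y := by rw [hy]; positivity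
  have hy1 : y ≤ 1 := by rw [hy, div_le_one habpos]; simp
  have hynn : (0:ℝ) ≤ 1 - y := by linarith
  obtain ⟨ε, hε⟩ : ∃ e : ℝ, e = (x - y) / y := ⟨_, rfl⟩
  obtain ⟨m, hm⟩ : ∃ m : ℝ, m = min |ε| (1/4) := ⟨_, rfl⟩
  rw [← hε, ← hm]
  have hm0 : 0 ≤ m := hm ▸ le_min (abs_nonneg _) (by norm_num)
  have hmabs : m ≤ |ε| := hm ▸ min_le_left _ _
  have hm4 : m ≤ 1/4 := hm ▸ min_le_right _ _
  have hmsq : m ^ 2 ≤ ε ^ 2 := by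
    calc m ^ 2 ≤ |ε| ^ 2 := by nlinarith [abs_nonneg ε]
      _ = ε ^ 2 := sq_abs ε
  have hεsq : (x - y) ^ 2 = ε ^ 2 * y ^ 2 := by
    rw [hε, div_pow]
    field_simp
  rcases le_total x y with hxy | hyx
  · -- x ≤ y
    have h1 := key_le ha hx0 (hy ▸ hxy)
    rw [← hy] at h1
    refine le_trans h1 ?_
    apply mul_le_mul_of_nonneg_left _ (by positivity)
    apply Real.exp_le_exp.2
    rw [neg_le_neg_iff]  -- check name
    have heq : (a:ℝ) * (x - y) ^ 2 / (2 * y ^ 2) = (a:ℝ) * ε ^ 2 / 2 := by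
      rw [hεsq]
      field_simp
    rw [heq]
    nlinarith [mul_nonneg hapos.le (sq_nonneg ε), hapos]
  · rcases le_total x (5 * y / 4) with hx54 | hx54
    · -- y ≤ x ≤ 5y/4
      have h1 := key_ge ha (hy ▸ hyx) hx1
      rw [← hy] at h1
      refine le_trans h1 ?_
      apply mul_le_mul_of_nonneg_left _ (by positivity)
      apply Real.exp_le_exp.2
      rw [neg_le_neg_iff]
      have hx0' : 0 < x := lt_of_lt_of_le hy0 hyx
      have hxx : x ^ 2 ≤ 2 * y ^ 2 := by nlinarith
      calc m ^ 2 * (a:ℝ) / 4 ≤ ε ^ 2 * (a:ℝ) / 4 := by nlinarith [hapos]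
        _ ≤ (a:ℝ) * (x - y) ^ 2 / (2 * x ^ 2) := by
            rw [hεsq, div_le_div_iff₀ (by norm_num) (by positivity)]
            have hkey : ((a:ℝ) * ε ^ 2) * (2 * x ^ 2) ≤ ((a:ℝ) * ε ^ 2) * (4 * y ^ 2) :=
              mul_le_mul_of_nonneg_left (by linarith) (mul_nonneg hapos.le (sq_nonneg ε))
            nlinarith [hkey]
    · -- 5y/4 ≤ x
      have hs1 : 5 * y / 4 ≤ 1 := le_trans hx54 hx1
      have h2 := mono_right ha (by rw [← hy]; linarith) hx54 hx1
      have hys : (a : ℝ) / ((a : ℝ) + b) ≤ 5 * y / 4 := by rw [← hy]; linarith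
      have h3 := key_ge ha hys hs1
      rw [← hy] at h3
      refine le_trans (le_trans h2 h3) ?_
      apply mul_le_mul_of_nonneg_left _ (by positivity)
      apply Real.exp_le_exp.2
      rw [neg_le_neg_iff]
      have hexp : (a:ℝ) * (5 * y / 4 - y) ^ 2 / (2 * (5 * y / 4) ^ 2) = (a:ℝ) / 50 := by
        rw [div_eq_div_iff (by positivity : (0:ℝ) < 2 * (5 * y / 4) ^ 2).ne' (by norm_num : (50:ℝ) ≠ 0)]
        ring
      rw [hexp]
      clear h2 h3 hys hs1
      have hms : m ^ 2 ≤ 1/16 := by nlinarith [hm0, hm4]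
      nlinarith [hapos, mul_le_mul_of_nonneg_left hms hapos.le]
end key2


lemma stirling_ub (n : ℕ) (hn : 1 ≤ n) :
    (n ! : ℝ) ≤ Real.exp 1 * Real.sqrt n * ((n : ℝ) / Real.exp 1) ^ n := by
  have hden : (0:ℝ) < Real.sqrt (2 * n) * ((n:ℝ) / Real.exp 1) ^ n := by
    have h0 : (0:ℝ) < n := by exact_mod_cast hn
    positivity
  have hfac : (n ! : ℝ) = Stirling.stirlingSeq n * (Real.sqrt (2 * n) * ((n:ℝ) / Real.exp 1) ^ n) := by
    rw [Stirling.stirlingSeq, div_mul_cancel₀ _ hden.ne']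
  have hmono : Stirling.stirlingSeq n ≤ Real.exp 1 / Real.sqrt 2 := by
    obtain ⟨m, rfl⟩ := Nat.exists_eq_add_of_le hn
    have h := Stirling.stirlingSeq'_antitone (Nat.zero_le m)
    simp only [Function.comp] at h
    calc Stirling.stirlingSeq (1 + m) = Stirling.stirlingSeq (m + 1) := by rw [Nat.add_comm]
      _ ≤ Stirling.stirlingSeq (0 + 1) := h
      _ = Real.exp 1 / Real.sqrt 2 := by norm_num [Stirling.stirlingSeq_one]
  calc (n ! : ℝ) = Stirling.stirlingSeq n * (Real.sqrt (2 * n) * ((n:ℝ) / Real.exp 1) ^ n) := hfac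
    _ ≤ (Real.exp 1 / Real.sqrt 2) * (Real.sqrt (2 * n) * ((n:ℝ) / Real.exp 1) ^ n) :=
        mul_le_mul_of_nonneg_right hmono hden.le
    _ = Real.exp 1 * Real.sqrt n * ((n : ℝ) / Real.exp 1) ^ n := by
        rw [show (2 * (n:ℕ) : ℝ) = 2 * (n:ℝ) by push_cast; ring, Real.sqrt_mul (by norm_num) (n:ℝ)]
        rw [div_mul_eq_mul_div, mul_comm (Real.sqrt 2) (Real.sqrt (n:ℝ))]
        field_simp [Real.sqrt_eq_zero']
lemma stirling_lb (n : ℕ) (hn : 1 ≤ n) :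
    Real.sqrt π * (Real.sqrt (2 * n) * ((n : ℝ) / Real.exp 1) ^ n) ≤ (n ! : ℝ) := by
  have hden : (0:ℝ) < Real.sqrt (2 * n) * ((n:ℝ) / Real.exp 1) ^ n := by
    have h0 : (0:ℝ) < n := by exact_mod_cast hn
    positivity
  have hfac : (n ! : ℝ) = Stirling.stirlingSeq n * (Real.sqrt (2 * n) * ((n:ℝ) / Real.exp 1) ^ n) := by
    rw [Stirling.stirlingSeq, div_mul_cancel₀ _ hden.ne']
  have hlb : Real.sqrt π ≤ Stirling.stirlingSeq n := by
    obtain ⟨m, rfl⟩ := Nat.exists_eq_add_of_le hn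
    have ht : Tendsto (Stirling.stirlingSeq ∘ Nat.succ) atTop (𝓝 (Real.sqrt π)) :=
      Stirling.tendsto_stirlingSeq_sqrt_pi.comp (Filter.tendsto_add_atTop_nat 1)
    have := Stirling.stirlingSeq'_antitone.le_of_tendsto ht m
    simpa [Function.comp, Nat.add_comm] using this
  rw [hfac]
  exact mul_le_mul_of_nonneg_right hlb hden.le


set_option maxHeartbeats 2000000 in
lemma peak (m b : ℕ) (hm : 1 ≤ m) :
    (((m + b + 1).choose (b + 1)) : ℝ) *
        ((m : ℝ) / ((m : ℝ) + b)) ^ m * ((b : ℝ) / ((m : ℝ) + b)) ^ b ≤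
      2 * (((m + b + 1 : ℕ) : ℝ) * Real.sqrt ((m + b + 1 : ℕ) : ℝ)) /
        ((((b + 1 : ℕ)) : ℝ) * Real.sqrt (((b + 1 : ℕ) : ℝ)) * Real.sqrt (m : ℝ)) := by
  set n : ℕ := m + b + 1 with hn
  set k : ℕ := b + 1 with hk
  have hkn : k ≤ n := by omega
  have hmn : n - k = m := by omega
  set N : ℝ := (n : ℝ) with hN
  set K : ℝ := (k : ℝ) with hK
  set M : ℝ := (m : ℝ) with hM
  set C1 : ℝ := (m : ℝ) + b with hC1
  have hMpos : 0 < M := by rw [hM]; exact_mod_cast hm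
  have hKpos : 0 < K := by rw [hK]; positivity
  have hNpos : 0 < N := by rw [hN]; positivity
  have hC1pos : 0 < C1 := by rw [hC1]; positivity
  have hbnn : (0:ℝ) ≤ (b:ℝ) := by positivity
  have hNC1 : N = C1 + 1 := by rw [hN, hC1, hn]; push_cast; ring
  have hKb : K = (b:ℝ) + 1 := by rw [hK, hk]; push_cast; ring
  have hC1c : C1 = ((m + b : ℕ) : ℝ) := by rw [hC1]; push_cast; ring
  set e : ℝ := Real.exp 1 with he
  have hepos : 0 < e := Real.exp_pos 1
  -- core scalar inequality
  have g1 : (b:ℝ) ^ b ≤ K ^ b := pow_le_pow_left₀ hbnn (by rw [hKb]; linarith) b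
  have g2 : N ^ (m + b) ≤ e * C1 ^ (m + b) := by
    have h1 : C1 + 1 ≤ C1 * Real.exp (1 / C1) := by
      have := Real.add_one_le_exp (1 / C1)
      have h2 := mul_le_mul_of_nonneg_left this hC1pos.le
      calc C1 + 1 = C1 * (1 / C1 + 1) := by field_simp; ring
        _ ≤ C1 * Real.exp (1 / C1) := h2
    calc N ^ (m + b) = (C1 + 1) ^ (m + b) := by rw [hNC1]
      _ ≤ (C1 * Real.exp (1 / C1)) ^ (m + b) := pow_le_pow_left₀ (by linarith) h1 _
      _ = C1 ^ (m + b) * Real.exp (1 / C1) ^ (m + b) := mul_pow _ _ _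
      _ = C1 ^ (m + b) * Real.exp (((m + b : ℕ) : ℝ) * (1 / C1)) := by
          rw [← Real.exp_nat_mul]
      _ = e * C1 ^ (m + b) := by
          rw [← hC1c, mul_one_div, div_self hC1pos.ne', he]
          ring
  have he2 : e ^ 2 ≤ 4 * π := by
    have h1 := Real.exp_one_lt_d9
    have h2 := Real.pi_gt_d6
    rw [he]
    nlinarith [Real.exp_pos 1]
  have hcore : e * N ^ n * (b:ℝ) ^ b * K ≤ 4 * π * N * K ^ k * C1 ^ (m + b) := by
    have hNn : N ^ n = N * N ^ (m + b) := by rw [hn]; ring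
    calc e * N ^ n * (b:ℝ) ^ b * K = e * (N * N ^ (m + b)) * (b:ℝ) ^ b * K := by rw [hNn]
      _ ≤ e * (N * (e * C1 ^ (m + b))) * K ^ b * K := by
          apply mul_le_mul_of_nonneg_right _ hKpos.le
          apply mul_le_mul _ g1 (by positivity) (by positivity)
          apply mul_le_mul_of_nonneg_left _ hepos.le
          exact mul_le_mul_of_nonneg_left g2 hNpos.le
      _ = e ^ 2 * N * K ^ (b + 1) * C1 ^ (m + b) := by ring
      _ ≤ 4 * π * N * K ^ (b + 1) * C1 ^ (m + b) := by
          apply mul_le_mul_of_nonneg_right _ (by positivity)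
          apply mul_le_mul_of_nonneg_right _ (by positivity)
          exact mul_le_mul_of_nonneg_right he2 hNpos.le
      _ = 4 * π * N * K ^ k * C1 ^ (m + b) := by rw [hk]
  -- factorial bounds
  have hA := stirling_ub n (by omega)
  have hBk := stirling_lb k (by omega)
  have hBm := stirling_lb m hm
  set A : ℝ := e * Real.sqrt N * (N / e) ^ n with hAdef
  set Bk : ℝ := Real.sqrt π * (Real.sqrt (2 * K) * (K / e) ^ k) with hBkdef
  set Bm : ℝ := Real.sqrt π * (Real.sqrt (2 * M) * (M / e) ^ m) with hBmdef
  have hBkpos : 0 < Bk := by rw [hBkdef]; positivity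
  have hBmpos : 0 < Bm := by rw [hBmdef]; positivity
  have hApos : 0 < A := by rw [hAdef]; positivity
  have hchoose : ((n.choose k : ℕ) : ℝ) ≤ A / (Bk * Bm) := by
    rw [Nat.cast_choose ℝ hkn, hmn]
    exact div_le_div₀ hApos.le hA (mul_pos hBkpos hBmpos)
      (mul_le_mul hBk hBm (by positivity) (Nat.cast_nonneg _))
  -- the peak value
  set P : ℝ := (M / C1) ^ m * ((b:ℝ) / C1) ^ b with hPdef
  have hPnn : 0 ≤ P := by rw [hPdef]; positivity
  have step1 : ((n.choose k : ℕ) : ℝ) * P ≤ A / (Bk * Bm) * P :=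
    mul_le_mul_of_nonneg_right hchoose hPnn
  -- step3 : A / (Bk*Bm) * P ≤ 2*(N*√N)/((K*√K)*√M)
  have hdenpos : (0:ℝ) < K * Real.sqrt K * Real.sqrt M := by positivity
  have step3 : A / (Bk * Bm) * P ≤ 2 * (N * Real.sqrt N) / (K * Real.sqrt K * Real.sqrt M) := by
    rw [div_mul_eq_mul_div, div_le_div_iff₀ (mul_pos hBkpos hBmpos) hdenpos]
    -- reduce to products
    have hππ : Real.sqrt π * Real.sqrt π = π := Real.mul_self_sqrt pi_pos.le
    have h22 : Real.sqrt 2 * Real.sqrt 2 = (2:ℝ) := Real.mul_self_sqrt (by norm_num)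
    have hs2K : Real.sqrt (2 * K) = Real.sqrt 2 * Real.sqrt K := Real.sqrt_mul (by norm_num) K
    have hs2M : Real.sqrt (2 * M) = Real.sqrt 2 * Real.sqrt M := Real.sqrt_mul (by norm_num) M
    have hLeq : A * P * (K * Real.sqrt K * Real.sqrt M) =
        (e * N ^ n * (b:ℝ) ^ b * K) *
          (Real.sqrt N * Real.sqrt K * Real.sqrt M * M ^ m) / (e ^ n * C1 ^ (m + b)) := by
      rw [hAdef, hPdef, div_pow, div_pow, div_pow]
      field_simp
      ring
    have hReq : 2 * (N * Real.sqrt N) * (Bk * Bm) =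
        (4 * π * N * K ^ k * C1 ^ (m + b)) *
          (Real.sqrt N * Real.sqrt K * Real.sqrt M * M ^ m) / (e ^ n * C1 ^ (m + b)) := by
      rw [hBkdef, hBmdef, hs2K, hs2M, div_pow, div_pow]
      have hek : e ^ k * e ^ m = e ^ n := by
        rw [hn, hk, ← pow_add]
        congr 1
        omega
      field_simp
      rw [← hek]
      have hπ2 : Real.sqrt π ^ 2 = π := Real.sq_sqrt Real.pi_pos.le
      have h22' : Real.sqrt 2 ^ 2 = 2 := Real.sq_sqrt (by norm_num)
      ring_nf
      rw [hπ2, h22']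
      ring
    rw [hLeq, hReq]
    apply div_le_div_of_nonneg_right _ (by positivity)
    exact mul_le_mul_of_nonneg_right hcore (by positivity)
  calc ((n.choose k : ℕ) : ℝ) * ((m : ℝ) / ((m : ℝ) + b)) ^ m * ((b : ℝ) / ((m : ℝ) + b)) ^ b
      = ((n.choose k : ℕ) : ℝ) * P := by rw [hPdef, hM, hC1]; ring
    _ ≤ A / (Bk * Bm) * P := step1
    _ ≤ 2 * (N * Real.sqrt N) / (K * Real.sqrt K * Real.sqrt M) := step3


set_option maxHeartbeats 1000000 in
/-- Lemma 6 (bound on `B₁`): with `y_{n,k} = (n−k)/(n−1)`, `ε = (x − y_{n,k})/y_{n,k}` and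
`q = n^{3/2} k^{-3/2} (n−k)^{-1/2}`, for all `1 ≤ k < n` and `x ∈ [0,1]`:
`(1/k)·C(n,k)·x^{n-k}(1-x)^{k-1} ≤ (C·q/k)·exp(−min{|ε|,1/4}²·(n−k)/4)`. -/
theorem B1_bound :
    ∃ C > (0 : ℝ), ∀ n k : ℕ, 1 ≤ k → k < n → ∀ x : ℝ, x ∈ Set.Icc (0 : ℝ) 1 →
      (1 / (k : ℝ)) * (n.choose k : ℝ) * x ^ (n - k) * (1 - x) ^ (k - 1) ≤
        C * ((n : ℝ) ^ ((3 : ℝ) / 2) * (k : ℝ) ^ (-(3 : ℝ) / 2) *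
              ((n : ℝ) - k) ^ (-(1 : ℝ) / 2)) / (k : ℝ) *
          Real.exp
            (-((min |(x - ((n : ℝ) - k) / ((n : ℝ) - 1)) / (((n : ℝ) - k) / ((n : ℝ) - 1))|
                  (1 / 4)) ^ 2 * ((n : ℝ) - k) / 4)) := by
  refine ⟨2, by norm_num, ?_⟩
  intro n k hk1 hkn x hx
  obtain ⟨hx0, hx1⟩ := hx
  set m : ℕ := n - k with hm
  set b : ℕ := k - 1 with hb
  have hm1 : 1 ≤ m := by omega
  have hnmb : n = m + b + 1 := by omega
  have hkb : k = b + 1 := by omega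
  have hKpos : (0:ℝ) < (k:ℝ) := by exact_mod_cast hk1
  have hMpos : (0:ℝ) < (m:ℝ) := by exact_mod_cast hm1
  have hNpos : (0:ℝ) < (n:ℝ) := by exact_mod_cast (by omega : 0 < n)
  have hMBpos : (0:ℝ) < (m:ℝ) + (b:ℝ) := by positivity
  have hnk : (n:ℝ) - (k:ℝ) = (m:ℝ) := by
    rw [hm]; exact_mod_cast (Nat.cast_sub hkn.le).symm
  have hn1 : (n:ℝ) - 1 = (m:ℝ) + (b:ℝ) := by
    have h2 : ((m + b : ℕ) : ℝ) = (m:ℝ) + (b:ℝ) := by push_cast; ring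
    rw [← h2]
    have hmb : m + b = n - 1 := by omega
    rw [hmb, Nat.cast_sub (by omega : 1 ≤ n)]
    norm_num
  rw [hnk, hn1]
  -- pointwise bound
  have hkeyB := keyB m b hm1 hx0 hx1
  -- peak bound, rewritten in terms of n, k
  have hpeak := peak m b hm1
  rw [← hnmb, ← hkb] at hpeak
  have h1y : 1 - (m:ℝ)/((m:ℝ) + (b:ℝ)) = (b:ℝ)/((m:ℝ) + (b:ℝ)) := by
    field_simp; ring
  -- rpow to sqrt
  have hrw : ∀ z : ℝ, 0 < z → z ^ ((3:ℝ)/2) = z * Real.sqrt z := by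
    intro z hz
    rw [show ((3:ℝ)/2) = 1 + 1/2 by norm_num, Real.rpow_add hz, Real.rpow_one,
      ← Real.sqrt_eq_rpow]
  have hq : (n:ℝ) ^ ((3:ℝ)/2) * (k:ℝ) ^ (-(3:ℝ)/2) * ((m:ℝ)) ^ (-(1:ℝ)/2)
      = ((n:ℝ) * Real.sqrt (n:ℝ)) / (((k:ℝ) * Real.sqrt (k:ℝ)) * Real.sqrt (m:ℝ)) := by
    rw [show (-(3:ℝ)/2) = -((3:ℝ)/2) by norm_num, show (-(1:ℝ)/2) = -((1:ℝ)/2) by norm_num]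
    rw [Real.rpow_neg hKpos.le, Real.rpow_neg hMpos.le]
    rw [hrw _ hNpos, hrw _ hKpos, ← Real.sqrt_eq_rpow]
    field_simp
  set E : ℝ := -((min |(x - (m:ℝ)/((m:ℝ) + (b:ℝ))) / ((m:ℝ)/((m:ℝ) + (b:ℝ)))| (1/4)) ^ 2 *
    (m:ℝ) / 4) with hE
  have hexpnn : 0 ≤ Real.exp E := (Real.exp_pos E).le
  have hchoosenn : (0:ℝ) ≤ (n.choose k : ℝ) := Nat.cast_nonneg _
  calc (1 / (k:ℝ)) * (n.choose k : ℝ) * x ^ m * (1 - x) ^ b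
      = (1 / (k:ℝ)) * ((n.choose k : ℝ) * (x ^ m * (1 - x) ^ b)) := by ring
    _ ≤ (1 / (k:ℝ)) * ((n.choose k : ℝ) *
          (((m:ℝ)/((m:ℝ) + (b:ℝ))) ^ m * (1 - (m:ℝ)/((m:ℝ) + (b:ℝ))) ^ b * Real.exp E)) := by
        apply mul_le_mul_of_nonneg_left _ (by positivity)
        exact mul_le_mul_of_nonneg_left hkeyB hchoosenn
    _ = (1 / (k:ℝ)) * (((n.choose k : ℝ) *
          ((m:ℝ)/((m:ℝ) + (b:ℝ))) ^ m * ((b:ℝ)/((m:ℝ) + (b:ℝ))) ^ b) * Real.exp E) := by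
        rw [h1y]; ring
    _ ≤ (1 / (k:ℝ)) * ((2 * ((n:ℝ) * Real.sqrt (n:ℝ)) /
          (((k:ℝ)) * Real.sqrt ((k:ℝ)) * Real.sqrt (m:ℝ))) * Real.exp E) := by
        apply mul_le_mul_of_nonneg_left _ (by positivity)
        exact mul_le_mul_of_nonneg_right hpeak hexpnn
    _ = 2 * ((n:ℝ) ^ ((3:ℝ)/2) * (k:ℝ) ^ (-(3:ℝ)/2) * ((m:ℝ)) ^ (-(1:ℝ)/2)) / (k:ℝ) *
          Real.exp E := by
        rw [hq]; ring
end

section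
/- There exists a universal constant C > 0 such that for all integers 1 ≤ k < n the following holds. Set y_{n,k} = (n−k)/(n−1), φ(y) = y^{n-k}(1-y)^{k-1}, and q = n^{3/2} k^{-3/2} (n−k)^{-1/2}. If ε > 0 and x ∈ [0,1] satisfies x > y_{n,k}(1+ε), then C(n,k)·∫_x^1 φ(y) dy ≤ C·q·exp( − min{ε, 1/4}² · (n−k) / 4 ), where C(n,k) is the binomial coefficient n choose k. -/
set_option maxHeartbeats 1000000

open scoped BigOperators
open scoped Nat


open Stirling Filter in
lemma my_sqrt_pi_le (j : ℕ) (hj : 1 ≤ j) : Real.sqrt Real.pi ≤ stirlingSeq j := by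
  obtain ⟨i, rfl⟩ := Nat.exists_eq_add_of_le hj
  have h : Tendsto (stirlingSeq ∘ Nat.succ) atTop (nhds (Real.sqrt Real.pi)) :=
    tendsto_stirlingSeq_sqrt_pi.comp (tendsto_add_atTop_nat 1)
  simpa [Nat.add_comm] using stirlingSeq'_antitone.le_of_tendsto h i

open scoped Nat in
open Stirling in
lemma my_stirling (j : ℕ) (hj : 1 ≤ j) :
    Real.sqrt (2*j) * ((j:ℝ)/Real.exp 1)^j ≤ (j ! : ℝ) ∧
      (j ! : ℝ) ≤ 2 * (Real.sqrt (2*j) * ((j:ℝ)/Real.exp 1)^j) := by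
  have hd : 0 < Real.sqrt (2*j) * ((j:ℝ)/Real.exp 1)^j := by
    have : (0:ℝ) < j := by exact_mod_cast hj
    positivity
  have hfact : (j ! : ℝ) = stirlingSeq j * (Real.sqrt (2*j) * ((j:ℝ)/Real.exp 1)^j) := by
    rw [stirlingSeq]; field_simp
  have hlo : Real.sqrt Real.pi ≤ stirlingSeq j := my_sqrt_pi_le j hj
  have hpi : (1:ℝ) ≤ Real.sqrt Real.pi := by
    rw [show (1:ℝ) = Real.sqrt 1 by simp]
    exact Real.sqrt_le_sqrt (by linarith [Real.pi_gt_three])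
  have hhi : stirlingSeq j ≤ 2 := by
    obtain ⟨i, rfl⟩ := Nat.exists_eq_add_of_le hj
    have h1 : stirlingSeq (1 + i) ≤ stirlingSeq 1 := by
      have := stirlingSeq'_antitone (Nat.zero_le i)
      simpa [Nat.add_comm] using this
    have : stirlingSeq 1 ≤ 2 := by
      rw [stirlingSeq_one]
      rw [div_le_iff₀ (by positivity)]
      have hs2 : (1.36:ℝ) ≤ Real.sqrt 2 := by
        nlinarith [Real.sqrt_nonneg 2, Real.sq_sqrt (by norm_num : (0:ℝ) ≤ 2)]
      nlinarith [Real.exp_one_lt_d9]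
    linarith
  constructor
  · rw [hfact]; nlinarith
  · rw [hfact]; nlinarith



lemma my_choose_bound (n k : ℕ) (h1 : 1 ≤ k) (h2 : k < n) :
    (n.choose k : ℝ) * ((k:ℝ)^k * ((n:ℝ)-(k:ℝ))^(n-k)) ≤
      2 * Real.sqrt ((n:ℝ)/((k:ℝ)*((n:ℝ)-(k:ℝ)))) * (n:ℝ)^n := by
  set e := Real.exp 1 with he
  have he0 : 0 < e := Real.exp_pos 1
  have hK0 : (0:ℝ) < k := by exact_mod_cast h1
  have hN0 : (0:ℝ) < n := lt_trans hK0 (by exact_mod_cast h2)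
  have hM : ((n-k:ℕ):ℝ) = (n:ℝ)-(k:ℝ) := by
    push_cast [Nat.cast_sub h2.le]; ring
  have hM0 : (0:ℝ) < (n:ℝ)-(k:ℝ) := by
    have : (k:ℝ) < n := by exact_mod_cast h2
    linarith
  set K := (k:ℝ)
  set N := (n:ℝ)
  set M := N - K with hMdef
  have hAn := (my_stirling n (by omega)).2
  have hAk := (my_stirling k h1).1
  have hAm := (my_stirling (n-k) (by omega)).1
  rw [hM] at hAm
  have hAk0 : (0:ℝ) < Real.sqrt (2*K) * (K/e)^k := by positivity
  have hAm0 : (0:ℝ) < Real.sqrt (2*M) * (M/e)^(n-k) := by positivity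
  have hfk : (0:ℝ) < (k ! : ℝ) := by exact_mod_cast k.factorial_pos
  have hfm : (0:ℝ) < ((n-k)! : ℝ) := by exact_mod_cast (n-k).factorial_pos
  have h3 : (n.choose k : ℝ) ≤
      2*(Real.sqrt (2*N)*(N/e)^n) /
        ((Real.sqrt (2*K)*(K/e)^k) * (Real.sqrt (2*M)*(M/e)^(n-k))) := by
    rw [Nat.cast_choose ℝ h2.le]
    apply div_le_div₀ (by positivity) hAn (by positivity)
    exact mul_le_mul hAk hAm (by positivity) (le_of_lt hfk)
  have hepow : e^k * e^(n-k) = e^n := by rw [← pow_add]; congr 1; omega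
  have heq : 2*(Real.sqrt (2*N)*(N/e)^n) /
        ((Real.sqrt (2*K)*(K/e)^k) * (Real.sqrt (2*M)*(M/e)^(n-k))) * (K^k * M^(n-k))
      = 2 * (Real.sqrt (2*N) / (Real.sqrt (2*K)*Real.sqrt (2*M))) * N^n := by
    rw [div_pow, div_pow, div_pow]
    have h2K : (0:ℝ) < Real.sqrt (2*K) := Real.sqrt_pos.mpr (by linarith)
    have h2M : (0:ℝ) < Real.sqrt (2*M) := Real.sqrt_pos.mpr (by linarith)
    field_simp
    linear_combination hepow
  have hB : Real.sqrt (2*N) / (Real.sqrt (2*K)*Real.sqrt (2*M)) ≤ Real.sqrt (N/(K*M)) := by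
    rw [← Real.sqrt_mul (by linarith) (2*M), ← Real.sqrt_div (by linarith)]
    apply Real.sqrt_le_sqrt
    rw [div_le_div_iff₀ (by positivity) (by positivity)]
    nlinarith [mul_pos hK0 hM0, mul_pos hN0 (mul_pos hK0 hM0)]
  calc (n.choose k : ℝ) * (K^k * M^(n-k))
      ≤ 2*(Real.sqrt (2*N)*(N/e)^n) /
        ((Real.sqrt (2*K)*(K/e)^k) * (Real.sqrt (2*M)*(M/e)^(n-k))) * (K^k * M^(n-k)) := by
        apply mul_le_mul_of_nonneg_right h3 (by positivity)
    _ = 2 * (Real.sqrt (2*N) / (Real.sqrt (2*K)*Real.sqrt (2*M))) * N^n := heq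
    _ ≤ 2 * Real.sqrt (N/(K*M)) * N^n := by
        apply mul_le_mul_of_nonneg_right _ (by positivity)
        linarith


lemma my_anti (p q : ℕ) (hp : 1 ≤ p) (hq : 1 ≤ q) :
    AntitoneOn (fun t : ℝ => t^p * (1-t)^q) (Set.Icc ((p:ℝ)/((p:ℝ)+(q:ℝ))) 1) := by
  have hp0 : (0:ℝ) < p := by exact_mod_cast hp
  have hq0 : (0:ℝ) < q := by exact_mod_cast hq
  have hder : ∀ t : ℝ, HasDerivAt (fun t:ℝ => t^p * (1-t)^q)
      ((p:ℝ)*t^(p-1)*(1-t)^q - t^p*((q:ℝ)*(1-t)^(q-1))) t := by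
    intro t
    have h0 : HasDerivAt (fun t:ℝ => 1-t) (-1 : ℝ) t := by
      simpa using (hasDerivAt_id t).const_sub (1:ℝ)
    have h1 : HasDerivAt (fun t:ℝ => (1-t)^q) ((q:ℝ)*(1-t)^(q-1) * (-1)) t :=
      (hasDerivAt_pow q (1-t)).comp t h0
    have h2 := (hasDerivAt_pow p t).mul h1
    convert h2 using 1
    all_goals first | rfl | ring
  apply antitoneOn_of_deriv_nonpos (convex_Icc _ _)
  · exact Continuous.continuousOn (by continuity)
  · intro t _
    exact (hder t).differentiableAt.differentiableWithinAt
  · intro t ht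
    rw [interior_Icc] at ht
    obtain ⟨ht1, ht2⟩ := ht
    have ht0 : 0 < t := lt_of_le_of_lt (by positivity) ht1
    have ht3 : (p:ℝ) ≤ t * ((p:ℝ)+(q:ℝ)) := by
      rw [div_lt_iff₀ (by positivity)] at ht1
      linarith
    rw [(hder t).deriv]
    have htp : t^p = t^(p-1)*t := by rw [← pow_succ]; congr 1; omega
    have htq : (1-t)^q = (1-t)^(q-1)*(1-t) := by rw [← pow_succ]; congr 1; omega
    have : (p:ℝ)*t^(p-1)*(1-t)^q - t^p*((q:ℝ)*(1-t)^(q-1))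
        = t^(p-1)*(1-t)^(q-1)*((p:ℝ)*(1-t) - (q:ℝ)*t) := by
      rw [htp, htq]; ring
    rw [this]
    apply mul_nonpos_of_nonneg_of_nonpos
    · have : (0:ℝ) ≤ 1 - t := by linarith
      positivity
    · nlinarith


lemma my_one_add_le (m : ℝ) (h0 : 0 < m) (h1 : m ≤ 1/4) :
    1 + m ≤ Real.exp (m - m^2/4) := by
  set u := (m - m^2/4)/3 with hu
  have hu0 : 0 ≤ u := by rw [hu]; nlinarith
  have h := Real.add_one_le_exp u
  have h3 : Real.exp (m - m^2/4) = (Real.exp u)^3 := by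
    rw [← Real.exp_nat_mul]
    congr 1
    rw [hu]; push_cast; ring
  rw [h3]
  calc 1 + m ≤ (1+u)^3 := by rw [hu]; nlinarith [sq_nonneg m, sq_nonneg (m - m^2/4)]
    _ ≤ (Real.exp u)^3 := pow_le_pow_left₀ (by linarith) (by linarith) 3

/-- Lemma 7 (bound on `B₂`, supercritical side): with `y_{n,k} = (n−k)/(n−1)`,
`φ(y) = y^{n-k}(1-y)^{k-1}` and `q = n^{3/2} k^{-3/2} (n−k)^{-1/2}`, if `ε > 0` and
`x ∈ [0,1]` with `x > y_{n,k}(1+ε)`, then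
`C(n,k)·∫_x^1 φ ≤ C·q·exp(−min{ε,1/4}²·(n−k)/4)`. -/
theorem B2_bound_supercritical :
    ∃ C > (0 : ℝ), ∀ n k : ℕ, 1 ≤ k → k < n → ∀ ε : ℝ, 0 < ε →
      ∀ x : ℝ, x ∈ Set.Icc (0 : ℝ) 1 →
        ((n : ℝ) - k) / ((n : ℝ) - 1) * (1 + ε) < x →
        (n.choose k : ℝ) * (∫ y in x..(1 : ℝ), y ^ (n - k) * (1 - y) ^ (k - 1)) ≤
          C * ((n : ℝ) ^ ((3 : ℝ) / 2) * (k : ℝ) ^ (-(3 : ℝ) / 2) *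
                ((n : ℝ) - k) ^ (-(1 : ℝ) / 2)) *
            Real.exp (-((min ε (1 / 4)) ^ 2 * ((n : ℝ) - k) / 4)) := by
  refine ⟨16, by norm_num, ?_⟩
  intro n k hk1 hkn ε hε x hx hxgt
  obtain ⟨hx0, hx1⟩ := hx
  set N := (n:ℝ) with hN
  set K := (k:ℝ) with hK
  have hK1 : (1:ℝ) ≤ K := by simp only [hK]; exact_mod_cast hk1
  have hKN : K < N := by simp only [hK, hN]; exact_mod_cast hkn
  have hN2 : (2:ℝ) ≤ N := by
    have h2 : 2 ≤ n := by omega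
    simp only [hN]; exact_mod_cast h2
  have hM0 : (0:ℝ) < N - K := by linarith
  have hc1 : ((n-k:ℕ):ℝ) = N - K := by
    rw [Nat.cast_sub hkn.le]
  have hc2 : ((k-1:ℕ):ℝ) = K - 1 := by
    rw [Nat.cast_sub hk1]; norm_num; rfl
  set ys := (N - K) / (N - 1) with hys
  set m := min ε (1/4) with hm
  have hm0 : 0 < m := lt_min hε (by norm_num)
  have hm14 : m ≤ 1/4 := min_le_right _ _
  have hmε : m ≤ ε := min_le_left _ _
  -- first derive k ≥ 2 etc.
  have hN1 : (1:ℝ) ≤ N - 1 := by linarith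
  have hys0 : 0 < ys := by rw [hys]; positivity
  set x₀ := ys * (1 + m) with hx₀
  have hx₀x : x₀ < x := by
    have : x₀ ≤ ys * (1 + ε) := by
      apply mul_le_mul_of_nonneg_left (by linarith) hys0.le
    linarith
  have hx₀1 : x₀ < 1 := lt_of_lt_of_le hx₀x hx1
  have hk2 : 2 ≤ k := by
    by_contra hcon
    have hkeq : k = 1 := by omega
    have hKK : K = 1 := by simp only [hK, hkeq]; norm_num
    rw [hx₀, hys, hKK] at hx₀1
    rw [div_mul_eq_mul_div, div_lt_one (by linarith)] at hx₀1
    nlinarith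
  have hK2 : (2:ℝ) ≤ K := by simp only [hK]; exact_mod_cast hk2
  have hKm1 : (0:ℝ) < K - 1 := by linarith
  -- t
  set t := m * (N - K) / (K - 1) with htdef
  clear_value N K ys m x₀ t
  have ht0 : 0 ≤ t := by rw [htdef]; positivity
  have h1ys : 1 - ys = (K - 1) / (N - 1) := by
    rw [hys]; field_simp; ring
  have hysx₀ : ys ≤ x₀ := by nlinarith
  have hx₀c : 1 - x₀ = (1 - ys) * (1 - t) := by
    rw [h1ys, hx₀, hys, htdef]; field_simp; ring
  have ht1 : t < 1 := by
    have h1 : 0 < 1 - x₀ := by linarith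
    rw [hx₀c] at h1
    have h2 : 0 < 1 - ys := by rw [h1ys]; positivity
    nlinarith
  -- antitone
  have hA : AntitoneOn (fun y : ℝ => y^(n-k) * (1-y)^(k-1)) (Set.Icc ys 1) := by
    have h := my_anti (n-k) (k-1) (by omega) (by omega)
    rw [hc1, hc2, show N - K + (K - 1) = N - 1 by ring, ← hys] at h
    exact h
  have hysx : ys ≤ x := le_trans hysx₀ hx₀x.le
  have hmemx : x ∈ Set.Icc ys 1 := ⟨hysx, hx1⟩
  have hmemx₀ : x₀ ∈ Set.Icc ys 1 := ⟨hysx₀, hx₀1.le⟩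
  -- integral bound
  have hcont : Continuous (fun y : ℝ => y^(n-k) * (1-y)^(k-1)) := by
    exact (continuous_pow _).mul ((continuous_const.sub continuous_id).pow _)
  have hIb : (∫ y in x..(1:ℝ), y^(n-k) * (1-y)^(k-1)) ≤ (1-x) * (x^(n-k) * (1-x)^(k-1)) := by
    have h1 : (∫ y in x..(1:ℝ), y^(n-k) * (1-y)^(k-1)) ≤
        ∫ _ in x..(1:ℝ), (x^(n-k) * (1-x)^(k-1)) := by
      apply intervalIntegral.integral_mono_on hx1
        (hcont.intervalIntegrable x 1) (intervalIntegrable_const)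
      intro y hy
      exact hA hmemx ⟨le_trans hysx hy.1, hy.2⟩ hy.1
    rwa [intervalIntegral.integral_const, smul_eq_mul] at h1
  have hφx₀ : (1-x) * (x^(n-k) * (1-x)^(k-1)) ≤ (1-x₀) * (x₀^(n-k) * (1-x₀)^(k-1)) := by
    apply mul_le_mul (by linarith) (hA hmemx₀ hmemx hx₀x.le) ?_ (by linarith)
    have h1 : (0:ℝ) ≤ 1 - x := by linarith
    positivity
  have hsplit : (1-x₀) * (x₀^(n-k) * (1-x₀)^(k-1)) = x₀^(n-k) * (1-x₀)^k := by
    rw [show (1-x₀)^k = (1-x₀)^(k-1) * (1-x₀) by rw [← pow_succ]; congr 1; omega]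
    ring
  have hfact : x₀^(n-k) * (1-x₀)^k
      = (ys^(n-k) * (1-ys)^k) * ((1+m)^(n-k) * (1-t)^k) := by
    rw [hx₀c, hx₀, mul_pow, mul_pow]; ring
  -- exponential bounds
  have hE1 : (1+m)^(n-k) ≤ Real.exp ((m - m^2/4) * (N - K)) := by
    calc (1+m)^(n-k) ≤ (Real.exp (m - m^2/4))^(n-k) :=
          pow_le_pow_left₀ (by linarith) (my_one_add_le m hm0 hm14) _
      _ = Real.exp ((m - m^2/4) * (N - K)) := by
          rw [← Real.exp_nat_mul, ← hc1]; ring_nf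
  have hE2 : (1-t)^k ≤ Real.exp (-(m * (N - K))) := by
    calc (1-t)^k ≤ (1-t)^(k-1) :=
          pow_le_pow_of_le_one (by linarith) (by linarith) (by omega)
      _ ≤ (Real.exp (-t))^(k-1) := by
          apply pow_le_pow_left₀ (by linarith)
          linarith [Real.add_one_le_exp (-t)]
      _ = Real.exp (-(m * (N - K))) := by
          rw [← Real.exp_nat_mul]
          congr 1
          rw [hc2, htdef]
          field_simp
  have hE : (1+m)^(n-k) * (1-t)^k ≤ Real.exp (-(m^2 * (N - K) / 4)) := by
    calc (1+m)^(n-k) * (1-t)^k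
        ≤ Real.exp ((m - m^2/4) * (N - K)) * Real.exp (-(m * (N - K))) := by
          apply mul_le_mul hE1 hE2 (pow_nonneg (by linarith) k) (Real.exp_nonneg _)
      _ = Real.exp (-(m^2 * (N - K) / 4)) := by
          rw [← Real.exp_add]; congr 1; ring
  -- choose bound
  have hq : (n.choose k : ℝ) * (ys^(n-k) * (1-ys)^k) ≤
      16 * (N ^ ((3:ℝ)/2) * K ^ (-(3:ℝ)/2) * (N - K) ^ (-(1:ℝ)/2)) := by
    have hN0 : (0:ℝ) < N := by linarith
    have hexp2 : (N/(N-1))^n ≤ 8 := by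
      have h1 : N/(N-1) ≤ Real.exp (1/(N-1)) := by
        rw [div_le_iff₀ (by linarith)]
        have h2 := Real.add_one_le_exp (1/(N-1))
        have h3 : (1/(N-1) + 1) * (N-1) = N := by field_simp; ring
        calc N = (1/(N-1)+1)*(N-1) := h3.symm
          _ ≤ Real.exp (1/(N-1))*(N-1) := by
              apply mul_le_mul_of_nonneg_right h2 (by linarith)
      calc (N/(N-1))^n ≤ (Real.exp (1/(N-1)))^n := pow_le_pow_left₀ (by positivity) h1 n
        _ = Real.exp ((n:ℝ)/(N-1)) := by rw [← Real.exp_nat_mul]; ring_nf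
        _ ≤ Real.exp 2 := by
            apply Real.exp_le_exp.mpr
            rw [div_le_iff₀ (by linarith)]
            have hn2 : (2:ℝ) ≤ N := by linarith
            nlinarith
        _ ≤ 8 := by
            rw [show (2:ℝ) = 1 + 1 by norm_num, Real.exp_add]
            nlinarith [Real.exp_one_lt_d9, Real.exp_pos 1]
    have hNn : N^n ≤ 8 * (N-1)^n := by
      have h0 : (N-1)^n * (N/(N-1))^n = N^n := by
        rw [← mul_pow]
        congr 1
        field_simp
      nlinarith [pow_pos (show (0:ℝ) < N-1 by linarith) n, hexp2,
        pow_nonneg (show (0:ℝ) ≤ N/(N-1) by positivity) n]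
    -- ys^(n-k)*(1-ys)^k = (N-K)^(n-k)*(K-1)^k/(N-1)^n
    have hysval : ys^(n-k) * (1-ys)^k = (N-K)^(n-k) * (K-1)^k / (N-1)^n := by
      rw [h1ys, hys, div_pow, div_pow, div_mul_div_comm, ← pow_add]
      congr 2
      omega
    have hKk : (K-1)^k ≤ K^k := pow_le_pow_left₀ (by linarith) (by linarith) k
    have hcb := my_choose_bound n k hk1 hkn
    rw [← hK, ← hN] at hcb
    have hch0 : (0:ℝ) ≤ (n.choose k : ℝ) := Nat.cast_nonneg _
    have hstep : (n.choose k : ℝ) * (ys^(n-k) * (1-ys)^k) ≤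
        8 * ((n.choose k : ℝ) * (K^k * (N-K)^(n-k))) / N^n := by
      rw [hysval, ← mul_div_assoc]
      rw [div_le_div_iff₀ (by positivity) (by positivity)]
      calc (n.choose k : ℝ) * ((N-K)^(n-k) * (K-1)^k) * N^n
          ≤ (n.choose k : ℝ) * ((N-K)^(n-k) * K^k) * (8 * (N-1)^n) := by
            apply mul_le_mul ?_ hNn (by positivity) ?_
            · apply mul_le_mul_of_nonneg_left ?_ hch0
              apply mul_le_mul_of_nonneg_left hKk (by positivity)
            · positivity
        _ = 8 * ((n.choose k : ℝ) * (K^k * (N-K)^(n-k))) * (N-1)^n := by ring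
    have hstep2 : 8 * ((n.choose k : ℝ) * (K^k * (N-K)^(n-k))) / N^n ≤
        16 * Real.sqrt (N/(K*(N-K))) := by
      rw [div_le_iff₀ (by positivity)]
      calc 8 * ((n.choose k : ℝ) * (K^k * (N-K)^(n-k)))
          ≤ 8 * (2 * Real.sqrt (N/(K*(N-K))) * N^n) := by
            apply mul_le_mul_of_nonneg_left hcb (by norm_num)
        _ = 16 * Real.sqrt (N/(K*(N-K))) * N^n := by ring
    -- sqrt ≤ rpow expression
    have hK0 : (0:ℝ) < K := by linarith
    have hrw : N ^ ((3:ℝ)/2) * K ^ (-(3:ℝ)/2) * (N - K) ^ (-(1:ℝ)/2)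
        = (N/K) * (Real.sqrt N / (Real.sqrt K * Real.sqrt (N-K))) := by
      rw [show (-(3:ℝ))/2 = -(1+1/2) by norm_num, show (-(1:ℝ))/2 = -(1/2 : ℝ) by norm_num,
        show ((3:ℝ))/2 = 1+1/2 by norm_num]
      rw [Real.rpow_neg hK0.le, Real.rpow_neg hM0.le, Real.rpow_add hK0, Real.rpow_add hN0,
        Real.rpow_one, Real.rpow_one, ← Real.sqrt_eq_rpow, ← Real.sqrt_eq_rpow,
        ← Real.sqrt_eq_rpow]
      have h1 : Real.sqrt K ≠ 0 := ne_of_gt (Real.sqrt_pos.mpr hK0)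
      have h2 : Real.sqrt (N-K) ≠ 0 := ne_of_gt (Real.sqrt_pos.mpr hM0)
      field_simp
    have hsq : Real.sqrt (N/(K*(N-K))) = Real.sqrt N / (Real.sqrt K * Real.sqrt (N-K)) := by
      rw [Real.sqrt_div hN0.le, Real.sqrt_mul hK0.le]
    have hfin : 16 * Real.sqrt (N/(K*(N-K))) ≤
        16 * (N ^ ((3:ℝ)/2) * K ^ (-(3:ℝ)/2) * (N - K) ^ (-(1:ℝ)/2)) := by
      rw [hrw, hsq]
      have hpos : (0:ℝ) ≤ Real.sqrt N / (Real.sqrt K * Real.sqrt (N-K)) := by positivity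
      have hNK1 : (1:ℝ) ≤ N/K := by rw [le_div_iff₀ hK0]; linarith
      have h5 : 1 * (Real.sqrt N / (Real.sqrt K * Real.sqrt (N-K))) ≤
          (N/K) * (Real.sqrt N / (Real.sqrt K * Real.sqrt (N-K))) :=
        mul_le_mul_of_nonneg_right hNK1 hpos
      linarith
    linarith
  -- final assembly
  have hq0 : (0:ℝ) ≤ ys^(n-k) * (1-ys)^k := by
    have h2 : 0 < 1 - ys := by rw [h1ys]; positivity
    positivity
  have hch0 : (0:ℝ) ≤ (n.choose k : ℝ) := Nat.cast_nonneg _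
  calc (n.choose k : ℝ) * (∫ y in x..(1:ℝ), y^(n-k) * (1-y)^(k-1))
      ≤ (n.choose k : ℝ) * (x₀^(n-k) * (1-x₀)^k) := by
        apply mul_le_mul_of_nonneg_left ?_ hch0
        calc (∫ y in x..(1:ℝ), y^(n-k) * (1-y)^(k-1))
            ≤ (1-x) * (x^(n-k) * (1-x)^(k-1)) := hIb
          _ ≤ (1-x₀) * (x₀^(n-k) * (1-x₀)^(k-1)) := hφx₀
          _ = x₀^(n-k) * (1-x₀)^k := hsplit
    _ = ((n.choose k : ℝ) * (ys^(n-k) * (1-ys)^k)) * ((1+m)^(n-k) * (1-t)^k) := by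
        rw [hfact]; ring
    _ ≤ (16 * (N ^ ((3:ℝ)/2) * K ^ (-(3:ℝ)/2) * (N - K) ^ (-(1:ℝ)/2))) *
          Real.exp (-(m^2 * (N - K) / 4)) := by
        apply mul_le_mul hq hE
          (mul_nonneg (by positivity) (pow_nonneg (by linarith) k)) (by positivity)
end

section
/- There exists a universal constant C > 0 such that for all integers 1 ≤ k < n the following holds. Set y_{n,k} = (n−k)/(n−1), φ(y) = y^{n-k}(1-y)^{k-1}, and q = n^{3/2} k^{-3/2} (n−k)^{-1/2}. If ε < 0 and x ∈ [0,1] satisfies x < y_{n,k}(1+ε), then | C(n,k)·∫_x^1 φ(y) dy − 1/k | ≤ C·q·exp( − min{|ε|, 1/4}² · (n−k) / 4 ), where C(n,k) is the binomial coefficient n choose k. -/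
open scoped BigOperators

open Real Stirling Filter Topology

private lemma B2aux_beta_nat (m : ℕ) : ∀ a : ℕ, ∫ y in (0:ℝ)..1, y^a*(1-y)^m
    = (a.factorial * m.factorial : ℝ)/(a+m+1).factorial := by
  induction m with
  | zero =>
    intro a
    simp only [pow_zero, mul_one, integral_pow, Nat.factorial_zero, Nat.cast_one,
      Nat.factorial_succ, Nat.add_zero]
    rw [one_pow, zero_pow (by omega)]
    push_cast
    have h2 : (a.factorial : ℝ) ≠ 0 := by positivity
    field_simp
    norm_num
  | succ m ih =>
    intro a
    have hu : ∀ y ∈ Set.uIcc (0:ℝ) 1, HasDerivAt (fun y : ℝ => (1-y)^(m+1))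
        (-((m+1) * (1-y)^m)) y := by
      intro y _
      have h1 : HasDerivAt (fun y : ℝ => 1 - y) (-1) y := by
        simpa using (hasDerivAt_id y).const_sub 1
      have := h1.pow (m+1)
      convert this using 1 <;> try rfl
      push_cast; ring
    have hv : ∀ y ∈ Set.uIcc (0:ℝ) 1, HasDerivAt (fun y : ℝ => y^(a+1)/(a+1))
        (y^a) y := by
      intro y _
      have := (hasDerivAt_pow (a+1) y).div_const ((a:ℝ)+1)
      convert this using 1 <;> try rfl
      push_cast
      field_simp
    have hiu : IntervalIntegrable (fun y : ℝ => -((m+1) * (1-y)^m)) MeasureTheory.volume 0 1 :=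
      (Continuous.intervalIntegrable (by continuity) 0 1)
    have hiv : IntervalIntegrable (fun y : ℝ => y^a) MeasureTheory.volume 0 1 :=
      (Continuous.intervalIntegrable (by continuity) 0 1)
    have ibp := intervalIntegral.integral_mul_deriv_eq_deriv_mul hu hv hiu hiv
    have key : ∫ y in (0:ℝ)..1, (1-y)^(m+1) * y^a
        = ((m:ℝ)+1)/((a:ℝ)+1) * ∫ y in (0:ℝ)..1, y^(a+1)*(1-y)^m := by
      rw [ibp, ← intervalIntegral.integral_const_mul]
      have e1 : ∀ y : ℝ, -((m+1) * (1-y)^m) * (y^(a+1)/(a+1))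
          = -( ((m:ℝ)+1)/((a:ℝ)+1) * (y^(a+1)*(1-y)^m)) := by
        intro y
        ring
      simp only [e1]
      rw [intervalIntegral.integral_neg]
      simp [zero_pow]
    have comm : ∫ y in (0:ℝ)..1, y^a*(1-y)^(m+1) = ∫ y in (0:ℝ)..1, (1-y)^(m+1) * y^a := by
      congr 1; ext y; ring
    rw [comm, key, ih (a+1)]
    have e2 : a + 1 + m + 1 = a + (m+1) + 1 := by omega
    rw [e2, Nat.factorial_succ a, Nat.factorial_succ m]
    push_cast
    have h1 : ((a:ℝ)+1) ≠ 0 := by positivity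
    have h2 : ((a+(m+1)+1).factorial : ℝ) ≠ 0 := by positivity
    field_simp

-- (1-t)e^t decreasing
private lemma B2aux_decay_mono {d t : ℝ} (hd : 0 ≤ d) (hdt : d ≤ t) (ht : t ≤ 1) :
    (1 - t) * exp t ≤ (1 - d) * exp d := by
  set s := t - d with hs
  have hs0 : 0 ≤ s := by simp [hs]; linarith
  have hexp : exp t = exp d * exp s := by rw [← exp_add]; congr 1; ring
  rw [hexp]
  rcases le_or_gt (1 - t) 0 with h | h
  · have : (1 - t) * (exp d * exp s) ≤ 0 :=
      mul_nonpos_of_nonpos_of_nonneg h (by positivity)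
    nlinarith [exp_pos d, exp_pos s]
  · -- 1 - t > 0, so s < 1 - d ≤ 1
    have hs1 : s < 1 := by linarith
    have hb : exp s ≤ 1 / (1 - s) := exp_bound_div_one_sub_of_interval hs0 hs1
    have h1s : 0 < 1 - s := by linarith
    have key : (1 - t) * exp s ≤ 1 - d := by
      calc (1 - t) * exp s ≤ (1 - t) * (1 / (1 - s)) := by
            apply mul_le_mul_of_nonneg_left hb h.le
        _ ≤ 1 - d := by
            rw [mul_one_div, div_le_iff₀ h1s]
            nlinarith
    calc (1 - t) * (exp d * exp s) = ((1 - t) * exp s) * exp d := by ring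
      _ ≤ (1 - d) * exp d := mul_le_mul_of_nonneg_right key (exp_pos d).le

-- quadratic gain at d ≤ 1/4
private lemma B2aux_decay_quad {d : ℝ} (hd : 0 ≤ d) (hd4 : d ≤ 1/4) :
    (1 - d) * exp d ≤ exp (-(d^2/4)) := by
  have key : (1 - d) * exp (d + d^2/4) ≤ 1 := by
    set u := d + d^2/4 with hu
    have hu0 : 0 ≤ u := by positivity
    have hu1 : u ≤ 1 := by rw [hu]; nlinarith [mul_le_mul hd4 hd4 hd (by norm_num : (0:ℝ) ≤ 1/4)]
    have hb := Real.exp_bound' hu0 hu1 (n := 3) (by norm_num)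
    have hb' : exp u ≤ 1 + u + u^2/2 + u^3 * (2/9) := by
      refine hb.trans ?_
      simp [Finset.sum_range_succ, Nat.factorial]
      ring_nf
      try rfl
      try nlinarith
    have h1d : 0 ≤ 1 - d := by linarith
    calc (1 - d) * exp u ≤ (1 - d) * (1 + u + u^2/2 + u^3 * (2/9)) :=
          mul_le_mul_of_nonneg_left hb' h1d
      _ ≤ 1 := by rw [hu]; nlinarith [sq_nonneg d, sq_nonneg (d - 1/4)]
  have hpos := exp_pos (d^2/4)
  have key2 : (1 - d) * exp d * exp (d^2/4) ≤ 1 := by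
    rw [mul_assoc, ← exp_add]
    exact key
  have h3 : (1 - d) * exp d ≤ 1 / exp (d^2/4) := by
    rw [le_div_iff₀ hpos]; exact key2
  rw [exp_neg]
  simpa [one_div] using h3

private lemma B2aux_stirling_lower (j : ℕ) : √π ≤ stirlingSeq (j+1) := by
  have ht : Tendsto (stirlingSeq ∘ Nat.succ) atTop (𝓝 (√π)) :=
    tendsto_stirlingSeq_sqrt_pi.comp (tendsto_add_atTop_nat 1)
  exact Stirling.stirlingSeq'_antitone.le_of_tendsto ht j

private lemma B2aux_stirling_upper (j : ℕ) : stirlingSeq (j+1) ≤ exp 1 / √2 := by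
  have := Stirling.stirlingSeq'_antitone (Nat.zero_le j)
  simpa [Stirling.stirlingSeq_one] using this

private lemma B2aux_factorial_eq (j : ℕ) (h : 1 ≤ j) :
    (j.factorial : ℝ) = stirlingSeq j * (√(2*j) * ((j:ℝ)/exp 1)^j) := by
  have hpos : 0 < √(2*(j:ℝ)) * ((j:ℝ)/exp 1)^j := by
    have : (0:ℝ) < j := by exact_mod_cast h
    positivity
  rw [stirlingSeq, div_mul_cancel₀]
  exact ne_of_gt hpos

private lemma B2aux_fact_upper (j : ℕ) (h : 1 ≤ j) :
    (j.factorial : ℝ) ≤ (exp 1/√2) * (√(2*j) * ((j:ℝ)/exp 1)^j) := by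
  rw [B2aux_factorial_eq j h]
  have hj : (0:ℝ) < j := by exact_mod_cast h
  have hb : (0:ℝ) ≤ √(2*j) * ((j:ℝ)/exp 1)^j := by positivity
  apply mul_le_mul_of_nonneg_right _ hb
  obtain ⟨i, rfl⟩ := Nat.exists_eq_add_of_le h
  simpa [Nat.add_comm] using B2aux_stirling_upper i

private lemma B2aux_fact_lower (j : ℕ) (h : 1 ≤ j) :
    √π * (√(2*j) * ((j:ℝ)/exp 1)^j) ≤ (j.factorial : ℝ) := by
  rw [B2aux_factorial_eq j h]
  have hj : (0:ℝ) < j := by exact_mod_cast h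
  have hb : (0:ℝ) ≤ √(2*j) * ((j:ℝ)/exp 1)^j := by positivity
  apply mul_le_mul_of_nonneg_right _ hb
  obtain ⟨i, rfl⟩ := Nat.exists_eq_add_of_le h
  simpa [Nat.add_comm] using B2aux_stirling_lower i

set_option maxHeartbeats 1000000 in
private lemma B2aux_choose_phi_le (n k : ℕ) (hk : 1 ≤ k) (hkn : k < n) :
    (n.choose k : ℝ) * (((n:ℝ)-k)/((n:ℝ)-1))^(n-k) * (((k:ℝ)-1)/((n:ℝ)-1))^(k-1)
      ≤ 2 * ((n:ℝ)*√n/((k:ℝ)*√k*√((n:ℝ)-k))) := by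
  set a := n - k with ha
  set m := k - 1 with hm
  have hka : k + a = n := by omega
  have ham : a + m = n - 1 := by omega
  have hm1 : m + 1 = k := by omega
  set N := (n:ℝ) with hN
  set K := (k:ℝ) with hK
  set A := (a:ℝ) with hA
  set M := (m:ℝ) with hMdef
  have hAeq : A = N - K := by rw [hA, hN, hK, ha]; push_cast [le_of_lt hkn]; ring
  have hMeq : M = K - 1 := by rw [hMdef, hK, hm]; push_cast [hk]; ring
  set N1 := ((n-1 : ℕ):ℝ) with hN1
  have hN1eq : N1 = N - 1 := by rw [hN1, hN]; push_cast [Nat.one_le_iff_ne_zero.mpr (by omega : n ≠ 0)]; ring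
  have hK1 : (1:ℝ) ≤ K := by rw [hK]; exact_mod_cast hk
  have hA1 : (1:ℝ) ≤ A := by rw [hA]; exact_mod_cast (by omega : 1 ≤ a)
  have hN11 : (1:ℝ) ≤ N1 := by rw [hN1]; exact_mod_cast (by omega : 1 ≤ n - 1)
  have hM0 : (0:ℝ) ≤ M := by rw [hMdef]; positivity
  have hN0 : (0:ℝ) < N := by rw [hN]; exact_mod_cast (by omega : 0 < n)
  have hK0 : (0:ℝ) < K := by linarith
  have hA0 : (0:ℝ) < A := by linarith
  have hN10 : (0:ℝ) < N1 := by linarith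
  have hE : (0:ℝ) < exp 1 := exp_pos 1
  -- choose as factorial ratio
  have hchoose_eq : (n.choose k : ℝ) = (n.factorial : ℝ) / ((k.factorial : ℝ) * (a.factorial : ℝ)) := by
    have := Nat.choose_mul_factorial_mul_factorial (le_of_lt hkn)
    have hc : ((n.choose k * k.factorial * (n-k).factorial : ℕ) : ℝ) = (n.factorial : ℝ) := by
      exact_mod_cast congrArg (Nat.cast : ℕ → ℝ) this
    push_cast at hc
    have h1 : (0:ℝ) < (k.factorial : ℝ) := by exact_mod_cast k.factorial_pos
    have h2 : (0:ℝ) < (a.factorial : ℝ) := by exact_mod_cast a.factorial_pos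
    rw [← ha] at hc
    field_simp
    linarith [hc]
  -- bound on choose
  have hbot : (0:ℝ) < √π * (√(2*K) * (K/exp 1)^k) * (√π * (√(2*A) * (A/exp 1)^a)) := by
    have : (0:ℝ) < π := pi_pos
    positivity
  have hchoose_le : (n.choose k : ℝ)
      ≤ ((exp 1/√2) * (√(2*N) * (N/exp 1)^n)) / (√π * (√(2*K) * (K/exp 1)^k) * (√π * (√(2*A) * (A/exp 1)^a))) := by
    rw [hchoose_eq]
    apply div_le_div₀ (by positivity) (B2aux_fact_upper n (by omega)) hbot
    apply mul_le_mul (B2aux_fact_lower k hk) (B2aux_fact_lower a (by omega)) (le_of_lt (by positivity)) (by positivity)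
  -- simplify the bound
  have hsimp : ((exp 1/√2) * (√(2*N) * (N/exp 1)^n)) / (√π * (√(2*K) * (K/exp 1)^k) * (√π * (√(2*A) * (A/exp 1)^a)))
      = exp 1 * √N * N^n / (2 * π * (√K * √A * K^k * A^a)) := by
    have e2N : √(2*N) = √2 * √N := Real.sqrt_mul (by norm_num) N
    have e2K : √(2*K) = √2 * √K := Real.sqrt_mul (by norm_num) K
    have e2A : √(2*A) = √2 * √A := Real.sqrt_mul (by norm_num) A
    have epow : (N/exp 1)^n = N^n/(exp 1)^n := div_pow N (exp 1) n
    have epowK : (K/exp 1)^k = K^k/(exp 1)^k := div_pow K (exp 1) k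
    have epowA : (A/exp 1)^a = A^a/(exp 1)^a := div_pow A (exp 1) a
    have hen : (exp 1)^k * (exp 1)^a = (exp 1)^n := by rw [← pow_add, hka]
    have hsq2 : √2 * √2 = 2 := Real.mul_self_sqrt (by norm_num)
    have hsqpi : √π * √π = π := Real.mul_self_sqrt pi_pos.le
    rw [e2N, e2K, e2A, epow, epowK, epowA]
    have h2 : (0:ℝ) < √2 := by positivity
    have hpi : (0:ℝ) < √π := Real.sqrt_pos.mpr pi_pos
    have hKk : (0:ℝ) < K^k := by positivity
    have hAa : (0:ℝ) < A^a := by positivity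
    have hEn : (0:ℝ) < (exp 1)^n := by positivity
    have hEk : (0:ℝ) < (exp 1)^k := by positivity
    have hEa : (0:ℝ) < (exp 1)^a := by positivity
    have hsK : (0:ℝ) < √K := by positivity
    have hsA : (0:ℝ) < √A := by positivity
    have hsN : (0:ℝ) < √N := by positivity
    have hen2 : rexp (k:ℝ) * rexp (a:ℝ) = rexp (n:ℝ) := by
      rw [← Real.exp_add]; congr 1; exact_mod_cast hka
    field_simp
    rw [← pow_add, hka, Real.sq_sqrt (by norm_num), Real.sq_sqrt pi_pos.le]
    ring
  have hchoose2 : (n.choose k : ℝ) ≤ exp 1 * √N * N^n / (2 * π * (√K * √A * K^k * A^a)) :=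
    hsimp ▸ hchoose_le
  rw [← hAeq, ← hMeq, ← hN1eq]
  have hpos1 : (0:ℝ) ≤ (A/N1)^a := by positivity
  have hpos2 : (0:ℝ) ≤ (M/N1)^m := by positivity
  have hRHS1pos : (0:ℝ) ≤ exp 1 * √N * N^n / (2 * π * (√K * √A * K^k * A^a)) := by
    have := pi_pos; positivity
  have step1 : (n.choose k : ℝ) * (A/N1)^a * (M/N1)^m
      ≤ (exp 1 * √N * N^n / (2 * π * (√K * √A * K^k * A^a))) * (A/N1)^a * (M/N1)^m := by
    gcongr
  have step2 : (exp 1 * √N * N^n / (2 * π * (√K * √A * K^k * A^a))) * (A/N1)^a * (M/N1)^m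
      = exp 1 * √N * N^n * M^m / (2 * π * (√K * √A * K^k * N1^(n-1))) := by
    have hfrac : (A/N1)^a * (M/N1)^m = A^a * M^m / N1^(n-1) := by
      rw [div_pow, div_pow, div_mul_div_comm, ← pow_add, ham]
    rw [mul_assoc, hfrac]
    have hAa : (0:ℝ) < A^a := by positivity
    have hN1n : (0:ℝ) < N1^(n-1) := by positivity
    have hKk : (0:ℝ) < K^k := by positivity
    have hpi := pi_pos
    have hsK : (0:ℝ) < √K := by positivity
    have hsA : (0:ℝ) < √A := by positivity
    field_simp
  have hNle : N ≤ N1 * exp (1/N1) := by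
    have h1 : N = N1 + 1 := by linarith
    have h2 : 1/N1 + 1 ≤ exp (1/N1) := Real.add_one_le_exp _
    calc N = N1 * (1/N1 + 1) := by field_simp [h1]; linarith
      _ ≤ N1 * exp (1/N1) := by apply mul_le_mul_of_nonneg_left h2 (by linarith)
  have hNn : N^(n-1) ≤ exp 1 * N1^(n-1) := by
    calc N^(n-1) ≤ (N1 * exp (1/N1))^(n-1) := by
          apply pow_le_pow_left₀ (by linarith) hNle
      _ = N1^(n-1) * exp (1/N1)^(n-1) := mul_pow _ _ _
      _ = N1^(n-1) * exp (((n-1:ℕ):ℝ) * (1/N1)) := by rw [← Real.exp_nat_mul]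
      _ = N1^(n-1) * exp 1 := by
          congr 1
          rw [← hN1]
          field_simp
      _ = exp 1 * N1^(n-1) := by ring
  have hS : exp 1 * N^n * (M^m * K) ≤ 4 * π * N * K^k * N1^(n-1) := by
    have hMK : M^m ≤ K^m := pow_le_pow_left₀ hM0 (by linarith) m
    have hKm : K^m * K = K^k := by rw [← pow_succ, hm1]
    have hNn' : N^n ≤ exp 1 * N * N1^(n-1) := by
      have hn' : n - 1 + 1 = n := by omega
      calc N^n = N^(n-1) * N := by rw [← pow_succ, hn']
        _ ≤ (exp 1 * N1^(n-1)) * N := by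
            apply mul_le_mul_of_nonneg_right hNn (by linarith)
        _ = exp 1 * N * N1^(n-1) := by ring
    have hEE : exp 1 * exp 1 ≤ 4 * π := by
      have he : exp 1 < 2.7182818286 := Real.exp_one_lt_d9
      have hp : (3:ℝ) < π := Real.pi_gt_three
      nlinarith [Real.exp_pos 1]
    have hMKK : M^m * K ≤ K^k := by
      rw [← hKm]
      apply mul_le_mul_of_nonneg_right hMK (by linarith)
    calc exp 1 * N^n * (M^m * K) ≤ exp 1 * (exp 1 * N * N1^(n-1)) * K^k := by
          apply mul_le_mul (mul_le_mul_of_nonneg_left hNn' hE.le) hMKK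
            (by positivity) (by positivity)
      _ = (exp 1 * exp 1) * (N * N1^(n-1) * K^k) := by ring
      _ ≤ (4*π) * (N * N1^(n-1) * K^k) := by
          apply mul_le_mul_of_nonneg_right hEE (by positivity)
      _ = 4 * π * N * K^k * N1^(n-1) := by ring
  have final : exp 1 * √N * N^n * M^m / (2 * π * (√K * √A * K^k * N1^(n-1)))
      ≤ 2 * (N*√N/(K*√K*√A)) := by
    have hpi := pi_pos
    have hsK : (0:ℝ) < √K := by positivity
    have hsA : (0:ℝ) < √A := by positivity
    have hsN : (0:ℝ) < √N := by positivity
    have hKk : (0:ℝ) < K^k := by positivity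
    have hN1n : (0:ℝ) < N1^(n-1) := by positivity
    rw [mul_div_assoc', div_le_div_iff₀ (by positivity) (by positivity)]
    have hh := mul_le_mul_of_nonneg_right hS (by positivity : (0:ℝ) ≤ √N * √K * √A)
    nlinarith [hh]
  calc (n.choose k : ℝ) * (A/N1)^a * (M/N1)^m
      ≤ (exp 1 * √N * N^n / (2 * π * (√K * √A * K^k * A^a))) * (A/N1)^a * (M/N1)^m := step1
    _ = exp 1 * √N * N^n * M^m / (2 * π * (√K * √A * K^k * N1^(n-1))) := step2
    _ ≤ 2 * (N*√N/(K*√K*√A)) := final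

private lemma B2aux_pointwise_bound (n k : ℕ) (hk : 1 ≤ k) (hkn : k < n) (d : ℝ) (hd0 : 0 < d)
    (hd4 : d ≤ 1/4) (y : ℝ) (hy0 : 0 ≤ y)
    (hyd : y ≤ ((n:ℝ)-k)/((n:ℝ)-1) * (1 - d)) :
    y^(n-k) * (1-y)^(k-1)
      ≤ (((n:ℝ)-k)/((n:ℝ)-1))^(n-k) * (((k:ℝ)-1)/((n:ℝ)-1))^(k-1) * exp (-(d^2*((n:ℝ)-k)/4)) := by
  set a := n - k with ha
  set m := k - 1 with hm
  set N := (n:ℝ) with hN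
  set K := (k:ℝ) with hK
  have hA1 : (1:ℝ) ≤ N - K := by
    rw [hN, hK]
    have : (k:ℝ) + 1 ≤ n := by exact_mod_cast hkn
    linarith
  have hN11 : (1:ℝ) ≤ N - 1 := by
    rw [hN]
    have : (1:ℝ) + 1 ≤ n := by exact_mod_cast (by omega : 1 + 1 ≤ n)
    linarith
  have hM0 : (0:ℝ) ≤ K - 1 := by
    rw [hK]; have : (1:ℝ) ≤ k := by exact_mod_cast hk
    linarith
  set A := N - K with hA'
  set M := K - 1 with hM'
  set N1 := N - 1 with hN1'
  have hAm : A = (a:ℝ) := by rw [hA', ha, hN, hK]; push_cast [le_of_lt hkn]; ring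
  have hMm : M = (m:ℝ) := by rw [hM', hm, hK]; push_cast [hk]; ring
  have hsum : A + M = N1 := by rw [hA', hM', hN1']; ring
  have hN10 : (0:ℝ) < N1 := by linarith
  have hA0 : (0:ℝ) < A := by linarith
  set Y := A/N1 with hY
  have hY0 : (0:ℝ) < Y := by positivity
  have h1Y : 1 - Y = M/N1 := by rw [hY]; field_simp; linarith [hsum]
  have h1Y0 : (0:ℝ) ≤ 1 - Y := by rw [h1Y]; positivity
  set t := 1 - y/Y with htdef
  have ht1 : t ≤ 1 := by
    rw [htdef]
    have : 0 ≤ y/Y := by positivity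
    linarith
  have htd : d ≤ t := by
    rw [htdef]
    have h2 : y/Y ≤ 1 - d := by
      rw [div_le_iff₀ hY0]
      calc y ≤ Y * (1-d) := hyd
        _ = (1-d) * Y := by ring
    linarith
  have ht0 : 0 ≤ t := by linarith
  have hyt : y = Y * (1 - t) := by
    rw [htdef]
    field_simp
    ring
  have h1t0 : (0:ℝ) ≤ 1 - t := by linarith
  -- factor 1
  have h1 : y^a = Y^a * (1-t)^a := by rw [hyt, mul_pow]
  -- factor 2
  have h2 : (1-y)^m ≤ (1-Y)^m * exp (t*A) := by
    rcases Nat.eq_zero_or_pos m with hm0 | hm0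
    · rw [hm0]
      simp only [pow_zero, one_mul]
      exact one_le_exp (by positivity)
    · have hM1 : (1:ℝ) ≤ M := by
        rw [hMm]; exact_mod_cast hm0
      have hMpos : (0:ℝ) < M := by linarith
      have hfact : 1 - y = (1-Y) * (1 + t*A/M) := by
        rw [h1Y, hyt, hY]
        field_simp
        ring
      rw [hfact, mul_pow]
      apply mul_le_mul_of_nonneg_left _ (by positivity)
      calc (1 + t*A/M)^m ≤ (exp (t*A/M))^m := by
            apply pow_le_pow_left₀ (by positivity)
            linarith [Real.add_one_le_exp (t*A/M)]
        _ = exp ((m:ℝ) * (t*A/M)) := by rw [← Real.exp_nat_mul]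
        _ = exp (t*A) := by
            congr 1
            rw [← hMm]
            field_simp
  -- factor 3
  have h3 : (1-t)^a * exp (t*A) ≤ exp (-(d^2/4))^a := by
    have e1 : exp (t*A) = (exp t)^a := by
      rw [← Real.exp_nat_mul, ← hAm]; ring_nf
    rw [e1, ← mul_pow]
    apply pow_le_pow_left₀ (by positivity)
    exact (B2aux_decay_mono hd0.le htd ht1).trans (B2aux_decay_quad hd0.le hd4)
  have hfin : exp (-(d^2/4))^a = exp (-(d^2*A/4)) := by
    rw [← Real.exp_nat_mul, ← hAm]; ring_nf
  calc y^a * (1-y)^m = (Y^a * (1-t)^a) * (1-y)^m := by rw [h1]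
    _ ≤ (Y^a * (1-t)^a) * ((1-Y)^m * exp (t*A)) := by
        apply mul_le_mul_of_nonneg_left h2 (by positivity)
    _ = (Y^a * (1-Y)^m) * ((1-t)^a * exp (t*A)) := by ring
    _ ≤ (Y^a * (1-Y)^m) * exp (-(d^2/4))^a := by
        apply mul_le_mul_of_nonneg_left h3 (by positivity)
    _ = Y^a * (M/N1)^m * exp (-(d^2*A/4)) := by rw [h1Y, hfin]

/-- Lemma 8 (bound on `B₂`, subcritical side): with `y_{n,k} = (n−k)/(n−1)`,
`φ(y) = y^{n-k}(1-y)^{k-1}` and `q = n^{3/2} k^{-3/2} (n−k)^{-1/2}`, if `ε < 0` and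
`x ∈ [0,1]` with `x < y_{n,k}(1+ε)`, then
`|C(n,k)·∫_x^1 φ − 1/k| ≤ C·q·exp(−min{|ε|,1/4}²·(n−k)/4)`. -/
theorem B2_bound_subcritical :
    ∃ C > (0 : ℝ), ∀ n k : ℕ, 1 ≤ k → k < n → ∀ ε : ℝ, ε < 0 →
      ∀ x : ℝ, x ∈ Set.Icc (0 : ℝ) 1 →
        x < ((n : ℝ) - k) / ((n : ℝ) - 1) * (1 + ε) →
        |(n.choose k : ℝ) * (∫ y in x..(1 : ℝ), y ^ (n - k) * (1 - y) ^ (k - 1)) -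
            1 / (k : ℝ)| ≤
          C * ((n : ℝ) ^ ((3 : ℝ) / 2) * (k : ℝ) ^ (-(3 : ℝ) / 2) *
                ((n : ℝ) - k) ^ (-(1 : ℝ) / 2)) *
            Real.exp (-((min |ε| (1 / 4)) ^ 2 * ((n : ℝ) - k) / 4)) := by
  refine ⟨2, by norm_num, ?_⟩
  intro n k hk hkn ε hε x hx hxlt
  obtain ⟨hx0, hx1⟩ := hx
  have hK1 : (1:ℝ) ≤ (k:ℝ) := by exact_mod_cast hk
  have hKN : (k:ℝ) + 1 ≤ (n:ℝ) := by exact_mod_cast hkn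
  have hA0 : (0:ℝ) < (n:ℝ) - k := by linarith
  have hN10 : (0:ℝ) < (n:ℝ) - 1 := by linarith
  have hN0 : (0:ℝ) < (n:ℝ) := by linarith
  have hK0 : (0:ℝ) < (k:ℝ) := by linarith
  set d := min |ε| (1/4) with hd
  have hd0 : 0 < d := lt_min (abs_pos.mpr (ne_of_lt hε)) (by norm_num)
  have hd4 : d ≤ 1/4 := min_le_right _ _
  have hY0 : (0:ℝ) ≤ ((n:ℝ)-k)/((n:ℝ)-1) := by positivity
  have h1e : 1 + ε ≤ 1 - d := by
    have h : d ≤ |ε| := min_le_left _ _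
    have h2 : |ε| = -ε := abs_of_neg hε
    linarith
  have hxd : x ≤ ((n:ℝ)-k)/((n:ℝ)-1) * (1-d) :=
    le_trans (le_of_lt hxlt) (mul_le_mul_of_nonneg_left h1e hY0)
  -- integrability
  have hc : Continuous (fun y:ℝ => y^(n-k)*(1-y)^(k-1)) := by continuity
  have hi0x : IntervalIntegrable (fun y:ℝ => y^(n-k)*(1-y)^(k-1)) MeasureTheory.volume 0 x :=
    hc.intervalIntegrable _ _
  have hix1 : IntervalIntegrable (fun y:ℝ => y^(n-k)*(1-y)^(k-1)) MeasureTheory.volume x 1 :=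
    hc.intervalIntegrable _ _
  have hsplit := intervalIntegral.integral_add_adjacent_intervals hi0x hix1
  -- beta value
  have hbeta : ∫ y in (0:ℝ)..1, y^(n-k)*(1-y)^(k-1)
      = ((n-k).factorial * (k-1).factorial : ℝ)/(n.factorial) := by
    rw [B2aux_beta_nat (k-1) (n-k), (by omega : (n-k)+(k-1)+1 = n)]
  have hcast : (n.choose k : ℝ) * (k.factorial) * ((n-k).factorial) = n.factorial := by
    exact_mod_cast congrArg (Nat.cast (R := ℝ))
      (Nat.choose_mul_factorial_mul_factorial (le_of_lt hkn))
  have hkf : (k.factorial : ℝ) = k * (k-1).factorial := by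
    have h1 : k = (k-1)+1 := by omega
    conv_lhs => rw [h1]
    rw [Nat.factorial_succ]
    push_cast [hk]
    ring
  have hchoosek : (n.choose k : ℝ) * (((n-k).factorial * (k-1).factorial : ℝ)/n.factorial)
      = 1/(k:ℝ) := by
    rw [hkf] at hcast
    have hnf : (n.factorial : ℝ) ≠ 0 := by positivity
    field_simp
    linear_combination hcast
  have key : (n.choose k:ℝ) * (∫ y in x..(1:ℝ), y^(n-k)*(1-y)^(k-1)) - 1/(k:ℝ)
      = -((n.choose k:ℝ) * ∫ y in (0:ℝ)..x, y^(n-k)*(1-y)^(k-1)) := by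
    have hx1int : ∫ y in x..(1:ℝ), y^(n-k)*(1-y)^(k-1)
        = (∫ y in (0:ℝ)..1, y^(n-k)*(1-y)^(k-1)) - ∫ y in (0:ℝ)..x, y^(n-k)*(1-y)^(k-1) := by
      linarith [hsplit]
    rw [hx1int, mul_sub, hbeta, hchoosek]
    ring
  rw [key, abs_neg]
  have hint_nonneg : 0 ≤ ∫ y in (0:ℝ)..x, y^(n-k)*(1-y)^(k-1) := by
    apply intervalIntegral.integral_nonneg hx0
    intro y hy
    have hy1 : y ≤ 1 := le_trans hy.2 hx1
    have h1y : (0:ℝ) ≤ 1 - y := by linarith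
    exact mul_nonneg (pow_nonneg hy.1 _) (pow_nonneg h1y _)
  rw [abs_of_nonneg (mul_nonneg (Nat.cast_nonneg _) hint_nonneg)]
  -- bound integral by constant
  set B := (((n:ℝ)-k)/((n:ℝ)-1))^(n-k) * (((k:ℝ)-1)/((n:ℝ)-1))^(k-1)
      * exp (-(d^2*((n:ℝ)-k)/4)) with hB
  have hBnn : 0 ≤ B := by
    rw [hB]
    have h1 : (0:ℝ) ≤ ((k:ℝ)-1) := by linarith
    positivity
  have hmono : ∫ y in (0:ℝ)..x, y^(n-k)*(1-y)^(k-1) ≤ x * B := by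
    have h := intervalIntegral.integral_mono_on hx0 hi0x
      (intervalIntegrable_const (c := B)) ?_
    · rw [intervalIntegral.integral_const, sub_zero, smul_eq_mul] at h
      exact h
    · intro y hy
      exact B2aux_pointwise_bound n k hk hkn d hd0 hd4 y hy.1 (le_trans hy.2 hxd)
  have hIB : ∫ y in (0:ℝ)..x, y^(n-k)*(1-y)^(k-1) ≤ B := by
    apply hmono.trans
    nlinarith [hBnn]
  have hchooseB : (n.choose k:ℝ) * B
      ≤ 2 * ((n:ℝ)*√n/((k:ℝ)*√k*√((n:ℝ)-k))) * exp (-(d^2*((n:ℝ)-k)/4)) := by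
    rw [hB, ← mul_assoc, ← mul_assoc]
    apply mul_le_mul_of_nonneg_right (B2aux_choose_phi_le n k hk hkn) (exp_pos _).le
  -- rpow identification
  have hrw : (n:ℝ) ^ ((3:ℝ)/2) * (k:ℝ) ^ (-(3:ℝ)/2) * ((n:ℝ)-k) ^ (-(1:ℝ)/2)
      = (n:ℝ)*√n/((k:ℝ)*√k*√((n:ℝ)-k)) := by
    have h32 : ∀ z : ℝ, 0 < z → z ^ ((3:ℝ)/2) = z * √z := by
      intro z hz
      rw [show (3:ℝ)/2 = 1 + 1/2 by norm_num, Real.rpow_add hz, Real.rpow_one,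
        Real.sqrt_eq_rpow]
    have hk32 : (k:ℝ) ^ (-(3:ℝ)/2) = 1/((k:ℝ)*√k) := by
      rw [show -(3:ℝ)/2 = -((3:ℝ)/2) by ring, Real.rpow_neg hK0.le, h32 _ hK0, one_div]
    have ha12 : ((n:ℝ)-k) ^ (-(1:ℝ)/2) = 1/√((n:ℝ)-k) := by
      rw [show -(1:ℝ)/2 = -((1:ℝ)/2) by ring, Real.rpow_neg hA0.le, one_div,
        Real.sqrt_eq_rpow]
      norm_num
    rw [h32 _ hN0, hk32, ha12]
    have h1 : (0:ℝ) < (k:ℝ)*√k := by positivity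
    have h2 : (0:ℝ) < √((n:ℝ)-k) := by positivity
    field_simp
  calc (n.choose k:ℝ) * ∫ y in (0:ℝ)..x, y^(n-k)*(1-y)^(k-1)
      ≤ (n.choose k:ℝ) * B := by
        apply mul_le_mul_of_nonneg_left hIB (by positivity)
    _ ≤ 2 * ((n:ℝ)*√n/((k:ℝ)*√k*√((n:ℝ)-k))) * exp (-(d^2*((n:ℝ)-k)/4)) := hchooseB
    _ = 2 * ((n:ℝ) ^ ((3:ℝ)/2) * (k:ℝ) ^ (-(3:ℝ)/2) * ((n:ℝ)-k) ^ (-(1:ℝ)/2))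
        * exp (-(d^2*((n:ℝ)-k)/4)) := by rw [hrw]
end

section
/- Let n and k be integers with 1 ≤ k < n, set y_{n,k} = (n−k)/(n−1) and ψ_{n,k}(y) = (n−k)·log y + (k−1)·log(1−y). Then for every real ε such that 0 < y_{n,k}(1+ε) < 1, ψ_{n,k}( y_{n,k}(1+ε) ) ≤ ψ_{n,k}( y_{n,k} ) − (n−k)·min{|ε|, 1/4}² / 4. -/
open scoped BigOperators

private theorem logB' {x : ℝ} (hx : 0 ≤ x) :
    Real.log (1 + x) ≤ x - x ^ 2 / (2 * (1 + x)) := by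
  have h1 : (0:ℝ) < 1 + x := by linarith
  have hs : Real.log (1 + x) ≤ ((1 + x) - (1 + x)⁻¹) / 2 := by
    rcases eq_or_lt_of_le hx with h | h
    · simp [← h]
    · have hl : 0 < Real.log (1 + x) := Real.log_pos (by linarith)
      have := (Real.self_lt_sinh_iff.mpr hl).le
      rwa [Real.sinh_log h1] at this
  have : ((1 + x) - (1 + x)⁻¹) / 2 = x - x ^ 2 / (2 * (1 + x)) := by
    field_simp
    ring
  linarith [this ▸ hs]

private theorem logA' {x : ℝ} (hx : -1 < x) (hx0 : x ≤ 0) :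
    Real.log (1 + x) ≤ x - x ^ 2 / 4 := by
  have h1 : (0:ℝ) < 1 + x := by linarith
  set s := Real.sqrt (1 + x) with hs
  have hsp : 0 < s := Real.sqrt_pos.mpr h1
  have hs2 : s ^ 2 = 1 + x := Real.sq_sqrt h1.le
  have hs1 : s ≤ 1 := by nlinarith
  have hlog : Real.log (1 + x) = 2 * Real.log s := by
    rw [← hs2, Real.log_pow]; push_cast; ring
  have hls : Real.log s ≤ s - 1 := Real.log_le_sub_one_of_pos hsp
  have key : 2 * (s - 1) ≤ x - x ^ 2 / 4 := by nlinarith [sq_nonneg (s - 1), sq_nonneg (s + 1)]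
  linarith [hlog ▸ (by linarith : 2 * Real.log s ≤ 2 * (s - 1))]

private theorem keyIneq' {x : ℝ} (hx : -1 < x) :
    Real.log (1 + x) ≤ x - (min |x| (1/4)) ^ 2 / 4 := by
  set m := min |x| (1/4) with hm
  have hm0 : 0 ≤ m := le_min (abs_nonneg x) (by norm_num)
  have hmx : m ≤ |x| := min_le_left _ _
  have hm4 : m ≤ 1/4 := min_le_right _ _
  rcases le_or_gt x 0 with h | h
  · have := logA' hx h
    have habs : |x| = -x := abs_of_nonpos h
    nlinarith [sq_abs x]
  · have hB := logB' h.le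
    have habs : |x| = x := abs_of_pos h
    have hdiv : m ^ 2 / 4 ≤ x ^ 2 / (2 * (1 + x)) := by
      rw [div_le_div_iff₀ (by norm_num) (by positivity)]
      rcases le_or_gt x (1/4) with h4 | h4
      · have hme : m = x := by rw [hm, habs, min_eq_left h4]
        nlinarith
      · nlinarith [mul_nonneg (by nlinarith : (0:ℝ) ≤ 1/16 - m^2) (by linarith : (0:ℝ) ≤ 2*(1+x)), sq_nonneg (x - 1/4)]
    linarith

set_option maxHeartbeats 1000000 in
/-- Concavity estimate for `ψ_{n,k}(y) = (n−k)·log y + (k−1)·log(1−y)` at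
`y = y_{n,k}(1+ε)` where `y_{n,k} = (n−k)/(n−1)`:
`ψ(y_{n,k}(1+ε)) ≤ ψ(y_{n,k}) − (n−k)·min{|ε|,1/4}²/4`. -/
theorem psi_peak_bound (n k : ℕ) (hk : 1 ≤ k) (hkn : k < n) (ε : ℝ)
    (h0 : 0 < ((n : ℝ) - k) / ((n : ℝ) - 1) * (1 + ε))
    (h1 : ((n : ℝ) - k) / ((n : ℝ) - 1) * (1 + ε) < 1) :
    ((n : ℝ) - k) * Real.log (((n : ℝ) - k) / ((n : ℝ) - 1) * (1 + ε)) +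
        ((k : ℝ) - 1) * Real.log (1 - ((n : ℝ) - k) / ((n : ℝ) - 1) * (1 + ε)) ≤
      ((n : ℝ) - k) * Real.log (((n : ℝ) - k) / ((n : ℝ) - 1)) +
          ((k : ℝ) - 1) * Real.log (1 - ((n : ℝ) - k) / ((n : ℝ) - 1)) -
        ((n : ℝ) - k) * (min |ε| (1 / 4)) ^ 2 / 4 := by
  have hk1 : (1:ℝ) ≤ (k:ℝ) := by exact_mod_cast hk
  have hkn1 : (k:ℝ) + 1 ≤ (n:ℝ) := by exact_mod_cast hkn
  set a : ℝ := (n:ℝ) - k with hadef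
  set b : ℝ := (k:ℝ) - 1 with hbdef
  have ha : 0 < a := by simp only [hadef]; linarith
  have hb : 0 ≤ b := by simp only [hbdef]; linarith
  have hN : (n:ℝ) - 1 = a + b := by simp only [hadef, hbdef]; ring
  have hNpos : 0 < (n:ℝ) - 1 := by linarith
  have hy0 : 0 < a / ((n:ℝ) - 1) := div_pos ha hNpos
  have h1e : 0 < 1 + ε := by
    rcases mul_pos_iff.mp h0 with ⟨_, h⟩ | ⟨h, _⟩
    · exact h
    · linarith
  have hε : -1 < ε := by linarith
  have hlog1 : Real.log (a / ((n:ℝ) - 1) * (1 + ε)) =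
      Real.log (a / ((n:ℝ) - 1)) + Real.log (1 + ε) :=
    Real.log_mul (ne_of_gt hy0) (ne_of_gt h1e)
  have hkey : Real.log (1 + ε) ≤ ε - (min |ε| (1/4)) ^ 2 / 4 := keyIneq' hε
  have hbpart : b * Real.log (1 - a / ((n:ℝ) - 1) * (1 + ε)) ≤
      b * Real.log (1 - a / ((n:ℝ) - 1)) - a * ε := by
    rcases eq_or_lt_of_le hb with hb0 | hbpos
    · -- b = 0, use ε ≤ 0 from h1
      have hb0' : b = 0 := hb0.symm
      have hNa : (n:ℝ) - 1 = a := by rw [hN, hb0']; ring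
      have : a / ((n:ℝ) - 1) = 1 := by rw [hNa, div_self ha.ne']
      rw [this] at h1
      have hε0 : ε < 0 := by linarith [h1]
      rw [hb0']
      nlinarith
    · -- b > 0
      have haε : a * ε < b := by
        rw [div_mul_eq_mul_div, div_lt_one hNpos] at h1
        nlinarith [h1, hN]
      have hby : 0 < b - a * ε := by linarith
      have e1 : 1 - a / ((n:ℝ) - 1) * (1 + ε) = (b - a * ε) / ((n:ℝ) - 1) := by
        field_simp
        nlinarith [hN]
      have e2 : 1 - a / ((n:ℝ) - 1) = b / ((n:ℝ) - 1) := by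
        field_simp
        nlinarith [hN]
      rw [e1, e2, Real.log_div hby.ne' hNpos.ne', Real.log_div hbpos.ne' hNpos.ne']
      have hlr : Real.log (b - a * ε) - Real.log b ≤ -(a * ε) / b := by
        have h3 := Real.log_le_sub_one_of_pos (div_pos hby hbpos)
        rw [Real.log_div hby.ne' hbpos.ne'] at h3
        have : (b - a * ε) / b - 1 = -(a * ε) / b := by field_simp; ring
        linarith [this ▸ h3]
      have h5 := mul_le_mul_of_nonneg_left hlr hbpos.le
      have h6 : b * (-(a * ε) / b) = -(a * ε) := by field_simp
      rw [h6] at h5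
      linarith [h5]
  rw [hlog1, mul_add]
  have hka := mul_le_mul_of_nonneg_left hkey ha.le
  linarith [hka, hbpart]
end
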